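/- arXiv:2407.21541 — 6 statements merged into one kernel-verified Lean document; each statement's English description precedes it below -/
import Mathlib

section
/- Let p ≥ 1 and let σ : ℝ^{m×d} → ℝ be separately convex, i.e. for every matrix A and every index pair (i,j) the function t ↦ σ(A + t E_{ij}) is convex on ℝ, where E_{ij} is the standard basis matrix. Assume |σ(ξ)| ≤ c₂(1 + ‖ξ‖^p) for all ξ. Then there exists a constant C > 0, depending only on c₂, p, m, d, such that |σ(A) − σ(B)| ≤ C (1 + ‖A‖^{p−1} + ‖B‖^{p−1}) ‖A − B‖ for all matrices A, B. -/
open Filter Topology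

attribute [local instance] Matrix.frobeniusNormedAddCommGroup Matrix.frobeniusNormedSpace

lemma frob_eq {m d : ℕ} (A : Matrix (Fin m) (Fin d) ℝ) :
    ‖A‖ = Real.sqrt (∑ i, ∑ j, (A i j)^2) := by
  rw [Matrix.frobenius_norm_def, Real.sqrt_eq_rpow]
  congr 1
  refine Finset.sum_congr rfl fun i _ => Finset.sum_congr rfl fun j _ => ?_
  rw [Real.rpow_two, Real.norm_eq_abs, sq_abs]

lemma sqrt_add_le' {x y : ℝ} (hx : 0 ≤ x) (hy : 0 ≤ y) :
    Real.sqrt (x + y) ≤ Real.sqrt x + Real.sqrt y := by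
  have h : x + y ≤ (Real.sqrt x + Real.sqrt y)^2 := by
    nlinarith [Real.sq_sqrt hx, Real.sq_sqrt hy, Real.sqrt_nonneg x, Real.sqrt_nonneg y,
      mul_nonneg (Real.sqrt_nonneg x) (Real.sqrt_nonneg y)]
  calc Real.sqrt (x + y) ≤ Real.sqrt ((Real.sqrt x + Real.sqrt y)^2) := Real.sqrt_le_sqrt h
    _ = _ := Real.sqrt_sq (by positivity)

lemma entry_le {m d : ℕ} (A : Matrix (Fin m) (Fin d) ℝ) (i : Fin m) (j : Fin d) :
    |A i j| ≤ ‖A‖ := by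
  rw [frob_eq]
  have h1 : (A i j)^2 ≤ ∑ j', (A i j')^2 :=
    Finset.single_le_sum (f := fun j' => (A i j')^2) (fun _ _ => sq_nonneg _) (Finset.mem_univ j)
  have h2 : (∑ j', (A i j')^2) ≤ ∑ i', ∑ j', (A i' j')^2 :=
    Finset.single_le_sum (f := fun i' => ∑ j', (A i' j')^2)
      (fun _ _ => Finset.sum_nonneg fun _ _ => sq_nonneg _) (Finset.mem_univ i)
  calc |A i j| = Real.sqrt ((A i j)^2) := (Real.sqrt_sq_eq_abs _).symm
    _ ≤ _ := Real.sqrt_le_sqrt (h1.trans h2)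

lemma norm_mix {m d : ℕ} {C A B : Matrix (Fin m) (Fin d) ℝ}
    (h : ∀ i j, (C i j)^2 ≤ (A i j)^2 + (B i j)^2) : ‖C‖ ≤ ‖A‖ + ‖B‖ := by
  rw [frob_eq, frob_eq, frob_eq]
  have hsum : (∑ i, ∑ j, (C i j)^2) ≤ (∑ i, ∑ j, (A i j)^2) + ∑ i, ∑ j, (B i j)^2 := by
    rw [← Finset.sum_add_distrib]
    refine Finset.sum_le_sum fun i _ => ?_
    rw [← Finset.sum_add_distrib]
    exact Finset.sum_le_sum fun j _ => h i j
  calc Real.sqrt (∑ i, ∑ j, (C i j)^2)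
      ≤ Real.sqrt ((∑ i, ∑ j, (A i j)^2) + ∑ i, ∑ j, (B i j)^2) := Real.sqrt_le_sqrt hsum
    _ ≤ _ := sqrt_add_le' (by positivity) (by positivity)

lemma onedim {g : ℝ → ℝ} (hg : ConvexOn ℝ Set.univ g) {u v r M : ℝ} (hr : 0 < r)
    (huv : u ≤ v) (hM : ∀ t, u - r ≤ t → t ≤ v + r → |g t| ≤ M) :
    |g v - g u| ≤ 2 * M * (v - u) / r := by
  rcases eq_or_lt_of_le huv with h | h
  · subst h; simp
  have h1 := hg.slope_mono_adjacent (Set.mem_univ u) (Set.mem_univ (v + r)) h (by linarith)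
  have h2 := hg.slope_mono_adjacent (Set.mem_univ (u - r)) (Set.mem_univ v) (by linarith) h
  have e1 : v + r - v = r := by ring
  have e2 : u - (u - r) = r := by ring
  rw [e1] at h1; rw [e2] at h2
  have hvu : 0 < v - u := by linarith
  have b1 := abs_le.1 (hM (v + r) (by linarith) (by linarith))
  have b2 := abs_le.1 (hM v (by linarith) (by linarith))
  have b3 := abs_le.1 (hM u (by linarith) (by linarith))
  have b4 := abs_le.1 (hM (u - r) (by linarith) (by linarith))
  have h1' : (g v - g u) * r ≤ (g (v + r) - g v) * (v - u) := (div_le_div_iff₀ hvu hr).1 h1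
  have h2' : (g u - g (u - r)) * (v - u) ≤ (g v - g u) * r := (div_le_div_iff₀ hr hvu).1 h2
  rw [abs_le]
  constructor
  · rw [neg_le, neg_sub, le_div_iff₀ hr]
    nlinarith
  · rw [le_div_iff₀ hr]
    nlinarith

set_option maxHeartbeats 2000000 in
/-- A separately convex function `σ` on `m × d` matrices (Frobenius norm) with
`|σ(ξ)| ≤ c₂(1 + ‖ξ‖^p)` satisfies the local Lipschitz estimate
`|σ(A) − σ(B)| ≤ C (1 + ‖A‖^{p−1} + ‖B‖^{p−1}) ‖A − B‖` for some constant `C > 0`. -/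
theorem stmt_7 (d m : ℕ) (hd : 1 ≤ d) (hm : 1 ≤ m) (p : ℝ) (hp : 1 ≤ p)
    (σ : Matrix (Fin m) (Fin d) ℝ → ℝ) (c₂ : ℝ) (hc₂ : 0 < c₂)
    (hsepconv : ∀ (A : Matrix (Fin m) (Fin d) ℝ) (i : Fin m) (j : Fin d),
      ConvexOn ℝ Set.univ (fun t : ℝ => σ (A + t • Matrix.single i j (1 : ℝ))))
    (hbound : ∀ ξ : Matrix (Fin m) (Fin d) ℝ, |σ ξ| ≤ c₂ * (1 + ‖ξ‖ ^ p)) :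
    ∃ C : ℝ, 0 < C ∧ ∀ A B : Matrix (Fin m) (Fin d) ℝ,
      |σ A - σ B| ≤ C * (1 + ‖A‖ ^ (p - 1) + ‖B‖ ^ (p - 1)) * ‖A - B‖ := by
  classical
  have hq : (0:ℝ) ≤ p - 1 := by linarith
  have h3p : (0:ℝ) < (3:ℝ) ^ p := Real.rpow_pos_of_pos (by norm_num) p
  have h3q : (0:ℝ) < (3:ℝ) ^ (p - 1) := Real.rpow_pos_of_pos (by norm_num) _
  have hm' : (1:ℝ) ≤ (m:ℝ) := by exact_mod_cast hm
  have hd' : (1:ℝ) ≤ (d:ℝ) := by exact_mod_cast hd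
  have hmd : (0:ℝ) < (m:ℝ) * d := by nlinarith
  refine ⟨2 * ((m:ℝ) * d) * c₂ * (1 + (3:ℝ) ^ p) * (3:ℝ) ^ (p - 1),
    mul_pos (mul_pos (mul_pos (mul_pos (by norm_num) hmd) hc₂) (by linarith)) h3q, ?_⟩
  intro A B
  set a := ‖A‖ with ha
  set b := ‖B‖ with hb
  have ha0 : 0 ≤ a := norm_nonneg A
  have hb0 : 0 ≤ b := norm_nonneg B
  set r := 1 + a + b with hrdef
  have hr1 : (1:ℝ) ≤ r := by rw [hrdef]; linarith
  have hr : (0:ℝ) < r := by linarith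
  set M := c₂ * (1 + (3 * r) ^ p) with hMdef
  have h3rp : (0:ℝ) < (3 * r) ^ p := Real.rpow_pos_of_pos (by linarith) p
  have hM0 : 0 < M := mul_pos hc₂ (by linarith)
  have hAB : ‖A - B‖ ≤ a + b := norm_sub_le A B
  -- key one-entry step estimate
  have key : ∀ (Cm : Matrix (Fin m) (Fin d) ℝ) (i : Fin m) (j : Fin d), ‖Cm‖ ≤ a + b →
      |σ (Cm + (A i j - B i j) • Matrix.single i j (1:ℝ)) - σ Cm|
        ≤ 2 * M / r * ‖A - B‖ := by
    intro Cm i j hCm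
    set v := A i j - B i j with hv
    have hvle : |v| ≤ ‖A - B‖ := by
      have := entry_le (A - B) i j
      simpa [Matrix.sub_apply] using this
    have hgconv := hsepconv Cm i j
    have hE : ‖Matrix.single i j (1:ℝ)‖ ≤ 1 := by
      have := entry_le (Matrix.single i j (1:ℝ)) i j
      have heq : Real.sqrt (∑ i', ∑ j', ((Matrix.single i j (1:ℝ)) i' j')^2) ≤ 1 := by
        have hsum : (∑ i', ∑ j', ((Matrix.single i j (1:ℝ)) i' j')^2) = 1 := by
          simp only [Matrix.single, Matrix.of_apply]
          rw [Finset.sum_eq_single i]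
          · rw [Finset.sum_eq_single j]
            · simp
            · intro j' _ hj'; simp [Ne.symm hj']
            · intro h; exact absurd (Finset.mem_univ j) h
          · intro i' _ hi'
            apply Finset.sum_eq_zero
            intro j' _
            simp [Ne.symm hi']
          · intro h; exact absurd (Finset.mem_univ i) h
        rw [hsum, Real.sqrt_one]
      rw [frob_eq]; exact heq
    have hMg : ∀ t : ℝ, |t| ≤ |v| + r → |σ (Cm + t • Matrix.single i j (1:ℝ))| ≤ M := by
      intro t ht
      have hnorm : ‖Cm + t • Matrix.single i j (1:ℝ)‖ ≤ 3 * r := by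
        have h1 : ‖t • Matrix.single i j (1:ℝ)‖ = |t| * ‖Matrix.single i j (1:ℝ)‖ := by
          rw [norm_smul, Real.norm_eq_abs]
        have hvab : |v| ≤ a + b := hvle.trans hAB
        have hEnn : (0:ℝ) ≤ ‖Matrix.single i j (1:ℝ)‖ := norm_nonneg _
        calc ‖Cm + t • Matrix.single i j (1:ℝ)‖
            ≤ ‖Cm‖ + ‖t • Matrix.single i j (1:ℝ)‖ := norm_add_le _ _
          _ = ‖Cm‖ + |t| * ‖Matrix.single i j (1:ℝ)‖ := by rw [h1]
          _ ≤ (a + b) + (|v| + r) * 1 := by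
              have := mul_le_mul (le_refl |t|) hE hEnn (abs_nonneg t)
              nlinarith [abs_nonneg t, mul_le_mul_of_nonneg_left hE (abs_nonneg t)]
          _ ≤ 3 * r := by rw [hrdef]; nlinarith
      calc |σ (Cm + t • Matrix.single i j (1:ℝ))| ≤ c₂ * (1 + ‖Cm + t • Matrix.single i j (1:ℝ)‖ ^ p) := hbound _
        _ ≤ M := by
          rw [hMdef]
          have : ‖Cm + t • Matrix.single i j (1:ℝ)‖ ^ p ≤ (3 * r) ^ p :=
            Real.rpow_le_rpow (norm_nonneg _) hnorm (by linarith)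
          nlinarith
    rcases le_or_gt 0 v with hv0 | hv0
    · have h := onedim hgconv hr (u := 0) hv0 (fun t h1 h2 => hMg t (abs_le.2
        ⟨by rw [abs_of_nonneg hv0]; linarith, by rw [abs_of_nonneg hv0]; linarith⟩))
      have h' : |σ (Cm + v • Matrix.single i j (1:ℝ))
          - σ (Cm + (0:ℝ) • Matrix.single i j (1:ℝ))| ≤ 2 * M * (v - 0) / r := h
      rw [zero_smul, add_zero] at h'
      calc |σ (Cm + v • Matrix.single i j (1:ℝ)) - σ Cm|
          ≤ 2 * M * (v - 0) / r := h'
        _ = 2 * M / r * v := by ring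
        _ ≤ 2 * M / r * ‖A - B‖ := by
            refine mul_le_mul_of_nonneg_left ((le_abs_self v).trans hvle) (div_pos (by linarith) hr).le
    · have h := onedim hgconv hr (v := 0) hv0.le (fun t h1 h2 => hMg t (abs_le.2
        ⟨by rw [abs_of_neg hv0]; linarith, by rw [abs_of_neg hv0]; linarith⟩))
      have h' : |σ (Cm + (0:ℝ) • Matrix.single i j (1:ℝ))
          - σ (Cm + v • Matrix.single i j (1:ℝ))| ≤ 2 * M * (0 - v) / r := h
      rw [zero_smul, add_zero] at h'
      calc |σ (Cm + v • Matrix.single i j (1:ℝ)) - σ Cm|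
          = |σ Cm - σ (Cm + v • Matrix.single i j (1:ℝ))| := abs_sub_comm _ _
        _ ≤ 2 * M * (0 - v) / r := h'
        _ = 2 * M / r * (-v) := by ring
        _ ≤ 2 * M / r * ‖A - B‖ := by
            refine mul_le_mul_of_nonneg_left ((neg_le_abs v).trans hvle) (div_pos (by linarith) hr).le
  -- telescoping
  set F : Finset (Fin m × Fin d) → Matrix (Fin m) (Fin d) ℝ :=
    fun S => Matrix.of fun i j => if (i, j) ∈ S then A i j else B i j with hF
  have hFnorm : ∀ S, ‖F S‖ ≤ a + b := by
    intro S
    apply norm_mix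
    intro i j
    simp only [hF, Matrix.of_apply]
    split_ifs
    · nlinarith [sq_nonneg (B i j)]
    · nlinarith [sq_nonneg (A i j)]
  have hFempty : F ∅ = B := by ext i j; simp [hF]
  have hFuniv : F Finset.univ = A := by ext i j; simp [hF]
  have hFinsert : ∀ (S : Finset (Fin m × Fin d)) (i : Fin m) (j : Fin d), (i, j) ∉ S →
      F (insert (i, j) S) = F S + (A i j - B i j) • Matrix.single i j (1:ℝ) := by
    intro S i j hij
    ext i' j'
    simp only [hF, Matrix.of_apply, Matrix.add_apply, Matrix.smul_apply, smul_eq_mul,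
      Finset.mem_insert]
    rcases eq_or_ne (i', j') (i, j) with he | he
    · injection he with h1 h2
      subst h1; subst h2
      rw [Matrix.single_apply_same]
      simp [hij]
    · have hne : ¬(i = i' ∧ j = j') := by rintro ⟨rfl, rfl⟩; exact he rfl
      rw [Matrix.single_apply_of_ne (h := hne)]
      simp only [mul_zero, add_zero]
      congr 1
      simp [he]
  have htel : ∀ S : Finset (Fin m × Fin d),
      |σ (F S) - σ B| ≤ (S.card : ℝ) * (2 * M / r * ‖A - B‖) := by
    intro S
    induction S using Finset.induction_on with
    | empty => simp [hFempty]
    | @insert x S hx ih =>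
      obtain ⟨i, j⟩ := x
      rw [hFinsert S i j hx]
      calc |σ (F S + (A i j - B i j) • Matrix.single i j (1:ℝ)) - σ B|
          ≤ |σ (F S + (A i j - B i j) • Matrix.single i j (1:ℝ)) - σ (F S)|
            + |σ (F S) - σ B| := abs_sub_le _ _ _
        _ ≤ 2 * M / r * ‖A - B‖ + (S.card : ℝ) * (2 * M / r * ‖A - B‖) :=
            add_le_add (key (F S) i j (hFnorm S)) ih
        _ = ((insert (i, j) S).card : ℝ) * (2 * M / r * ‖A - B‖) := by
            rw [Finset.card_insert_of_notMem hx]; push_cast; ring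
  have hfin := htel Finset.univ
  rw [hFuniv] at hfin
  have hcard : ((Finset.univ : Finset (Fin m × Fin d)).card : ℝ) = (m:ℝ) * d := by
    rw [Finset.card_univ, Fintype.card_prod, Fintype.card_fin, Fintype.card_fin]
    push_cast; ring
  rw [hcard] at hfin
  -- constant arithmetic
  have hrq1 : (1:ℝ) ≤ r ^ (p - 1) := by
    calc (1:ℝ) = r ^ (0:ℝ) := (Real.rpow_zero r).symm
      _ ≤ r ^ (p - 1) := Real.rpow_le_rpow_of_exponent_le hr1 hq
  have hsplit : (3 * r) ^ p = (3:ℝ) ^ p * (r ^ (p - 1) * r) := by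
    rw [Real.mul_rpow (by norm_num) hr.le]
    congr 1
    have h := Real.rpow_add hr (p - 1) 1
    rw [Real.rpow_one] at h
    rw [← h]; norm_num
  have hMr : 2 * M / r ≤ 2 * c₂ * (1 + (3:ℝ) ^ p) * r ^ (p - 1) := by
    rw [div_le_iff₀ hr, hMdef, hsplit]
    have h1 : 1 ≤ r ^ (p - 1) * r := by nlinarith
    nlinarith [mul_pos h3p (lt_of_lt_of_le zero_lt_one h1), hc₂.le]
  have hrq : r ^ (p - 1) ≤ (3:ℝ) ^ (p - 1) * (1 + a ^ (p - 1) + b ^ (p - 1)) := by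
    set t := max 1 (max a b) with ht
    have ht1 : (1:ℝ) ≤ t := le_max_left _ _
    have hta : a ≤ t := le_trans (le_max_left a b) (le_max_right _ _)
    have htb : b ≤ t := le_trans (le_max_right a b) (le_max_right _ _)
    have hrt : r ≤ 3 * t := by rw [hrdef]; linarith
    have h1 : r ^ (p - 1) ≤ (3 * t) ^ (p - 1) := Real.rpow_le_rpow (by linarith) hrt hq
    have h2 : (3 * t) ^ (p - 1) = (3:ℝ) ^ (p - 1) * t ^ (p - 1) :=
      Real.mul_rpow (by norm_num) (by linarith)
    have hanon : 0 ≤ a ^ (p - 1) := Real.rpow_nonneg ha0 _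
    have hbnon : 0 ≤ b ^ (p - 1) := Real.rpow_nonneg hb0 _
    have h3 : t ^ (p - 1) ≤ 1 + a ^ (p - 1) + b ^ (p - 1) := by
      rcases max_cases 1 (max a b) with ⟨h, _⟩ | ⟨h, _⟩
      · rw [ht, h, Real.one_rpow]; linarith
      · rcases max_cases a b with ⟨h', _⟩ | ⟨h', _⟩
        · rw [ht, h, h']; linarith
        · rw [ht, h, h']; linarith
    calc r ^ (p - 1) ≤ (3:ℝ) ^ (p - 1) * t ^ (p - 1) := h2 ▸ h1
      _ ≤ (3:ℝ) ^ (p - 1) * (1 + a ^ (p - 1) + b ^ (p - 1)) :=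
          mul_le_mul_of_nonneg_left h3 h3q.le
  have hABnn : (0:ℝ) ≤ ‖A - B‖ := norm_nonneg _
  calc |σ A - σ B| ≤ (m:ℝ) * d * (2 * M / r * ‖A - B‖) := hfin
    _ = (m:ℝ) * d * (2 * M / r) * ‖A - B‖ := by ring
    _ ≤ (m:ℝ) * d * (2 * c₂ * (1 + (3:ℝ) ^ p) * r ^ (p - 1)) * ‖A - B‖ := by
        refine mul_le_mul_of_nonneg_right (mul_le_mul_of_nonneg_left hMr hmd.le) hABnn
    _ ≤ (m:ℝ) * d * (2 * c₂ * (1 + (3:ℝ) ^ p)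
          * ((3:ℝ) ^ (p - 1) * (1 + a ^ (p - 1) + b ^ (p - 1)))) * ‖A - B‖ := by
        refine mul_le_mul_of_nonneg_right (mul_le_mul_of_nonneg_left
          (mul_le_mul_of_nonneg_left hrq (by positivity)) hmd.le) hABnn
    _ = 2 * ((m:ℝ) * d) * c₂ * (1 + (3:ℝ) ^ p) * (3:ℝ) ^ (p - 1)
          * (1 + a ^ (p - 1) + b ^ (p - 1)) * ‖A - B‖ := by ring
end

section
/- Let p > 1 and let σ : ℝ^{m×d} → ℝ satisfy the local Lipschitz estimate |σ(A) − σ(B)| ≤ C (1 + ‖A‖^{p−1} + ‖B‖^{p−1}) ‖A − B‖ for all matrices A, B, and admit a recession function σ₀. Then σ₀ satisfies |σ₀(A) − σ₀(B)| ≤ C (‖A‖^{p−1} + ‖B‖^{p−1}) ‖A − B‖ for all matrices A, B; in particular σ₀ is continuous. -/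
open Filter Topology

attribute [local instance] Matrix.frobeniusNormedAddCommGroup Matrix.frobeniusNormedSpace

/-- If `σ` satisfies the local Lipschitz estimate
`|σ(A) − σ(B)| ≤ C(1 + ‖A‖^{p−1} + ‖B‖^{p−1})‖A − B‖` and admits a recession function `σ₀`
of exponent `p > 1`, then `|σ₀(A) − σ₀(B)| ≤ C(‖A‖^{p−1} + ‖B‖^{p−1})‖A − B‖`; in
particular `σ₀` is continuous. -/
theorem stmt_8 (d m : ℕ) (hd : 1 ≤ d) (hm : 1 ≤ m) (p : ℝ) (hp : 1 < p) (C : ℝ) (hC : 0 < C)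
    (σ σ₀ : Matrix (Fin m) (Fin d) ℝ → ℝ)
    (hlip : ∀ A B : Matrix (Fin m) (Fin d) ℝ,
      |σ A - σ B| ≤ C * (1 + ‖A‖ ^ (p - 1) + ‖B‖ ^ (p - 1)) * ‖A - B‖)
    (hrec : ∀ ξ : Matrix (Fin m) (Fin d) ℝ,
      Tendsto (fun t : ℝ => σ (t • ξ) / t ^ p) atTop (𝓝 (σ₀ ξ))) :
    (∀ A B : Matrix (Fin m) (Fin d) ℝ,
        |σ₀ A - σ₀ B| ≤ C * (‖A‖ ^ (p - 1) + ‖B‖ ^ (p - 1)) * ‖A - B‖) ∧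
      Continuous σ₀ := by
  have hp1 : (0:ℝ) < p - 1 := by linarith
  have key : ∀ A B : Matrix (Fin m) (Fin d) ℝ,
      |σ₀ A - σ₀ B| ≤ C * (‖A‖ ^ (p - 1) + ‖B‖ ^ (p - 1)) * ‖A - B‖ := by
    intro A B
    have h1 : Tendsto (fun t : ℝ => |σ (t • A) / t ^ p - σ (t • B) / t ^ p|) atTop
        (𝓝 |σ₀ A - σ₀ B|) := ((hrec A).sub (hrec B)).abs
    have h2 : Tendsto (fun t : ℝ => C * (t ^ (-(p-1)) + ‖A‖ ^ (p - 1) + ‖B‖ ^ (p - 1)) * ‖A - B‖)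
        atTop (𝓝 (C * (0 + ‖A‖ ^ (p - 1) + ‖B‖ ^ (p - 1)) * ‖A - B‖)) := by
      exact ((tendsto_const_nhds.mul (((tendsto_rpow_neg_atTop hp1).add
        tendsto_const_nhds).add tendsto_const_nhds)).mul tendsto_const_nhds)
    have hev : ∀ᶠ t : ℝ in atTop,
        |σ (t • A) / t ^ p - σ (t • B) / t ^ p| ≤
          C * (t ^ (-(p-1)) + ‖A‖ ^ (p - 1) + ‖B‖ ^ (p - 1)) * ‖A - B‖ := by
      filter_upwards [eventually_gt_atTop (0:ℝ)] with t ht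
      have htp : (0:ℝ) < t ^ p := Real.rpow_pos_of_pos ht p
      have hts : (0:ℝ) < t ^ (p-1) := Real.rpow_pos_of_pos ht (p-1)
      rw [div_sub_div_same, abs_div, abs_of_pos htp, div_le_iff₀ htp]
      have hA : ‖t • A‖ = t * ‖A‖ := by rw [norm_smul, Real.norm_eq_abs, abs_of_pos ht]
      have hB : ‖t • B‖ = t * ‖B‖ := by rw [norm_smul, Real.norm_eq_abs, abs_of_pos ht]
      have hAB : ‖t • A - t • B‖ = t * ‖A - B‖ := by
        rw [← smul_sub, norm_smul, Real.norm_eq_abs, abs_of_pos ht]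
      calc |σ (t • A) - σ (t • B)|
          ≤ C * (1 + ‖t • A‖ ^ (p - 1) + ‖t • B‖ ^ (p - 1)) * ‖t • A - t • B‖ := hlip _ _
        _ = C * (t ^ (-(p-1)) + ‖A‖ ^ (p - 1) + ‖B‖ ^ (p - 1)) * ‖A - B‖ * t ^ p := by
            rw [hA, hB, hAB, Real.mul_rpow ht.le (norm_nonneg A),
              Real.mul_rpow ht.le (norm_nonneg B), Real.rpow_neg ht.le,
              show p = (p - 1) + 1 by ring, Real.rpow_add ht, Real.rpow_one]
            field_simp
            ring
    have := le_of_tendsto_of_tendsto h1 h2 hev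
    rwa [zero_add] at this
  refine ⟨key, ?_⟩
  rw [continuous_iff_continuousAt]
  intro A
  have hnorm : Continuous fun B : Matrix (Fin m) (Fin d) ℝ => ‖B‖ ^ (p - 1) := by
    apply Continuous.rpow_const continuous_norm
    intro x; right; linarith
  have hg : Tendsto (fun B : Matrix (Fin m) (Fin d) ℝ =>
      C * (‖B‖ ^ (p - 1) + ‖A‖ ^ (p - 1)) * ‖B - A‖) (𝓝 A)
      (𝓝 (C * (‖A‖ ^ (p - 1) + ‖A‖ ^ (p - 1)) * ‖A - A‖)) := by
    exact ((tendsto_const_nhds.mul ((hnorm.tendsto A).add tendsto_const_nhds)).mul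
      ((continuous_id.sub continuous_const).norm.tendsto A))
  have hg0 : Tendsto (fun B : Matrix (Fin m) (Fin d) ℝ =>
      C * (‖B‖ ^ (p - 1) + ‖A‖ ^ (p - 1)) * ‖B - A‖) (𝓝 A) (𝓝 0) := by
    simpa using hg
  have : Tendsto (fun B => σ₀ B - σ₀ A) (𝓝 A) (𝓝 0) := by
    apply squeeze_zero_norm (fun B => ?_) hg0
    simpa [Real.norm_eq_abs] using key B A
  have := this.add (tendsto_const_nhds (x := σ₀ A))
  exact (by simpa using this : Tendsto (fun x => σ₀ x) (𝓝 A) (𝓝 (σ₀ A)))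
end

section
/- Let d, m ≥ 1 and 1 ≤ p < ∞. Let Q = (−1/2, 1/2)^d be the open unit cube, let C₁ = B(0, 1/4) \ closure(B(0, 1/16)) be a reference annulus, and for ρ ∈ (0,1) set C_ρ = ρ·C₁ = B(0, ρ/4) \ closure(B(0, ρ/16)). Then there exists a constant c = c(p, d) > 0 such that for every continuously differentiable u : Q → ℝ^m with ∫_Q ‖Du‖^p dx < ∞ and every ρ ∈ (0,1), one has ∫_Q |u(x) − u_ρ|^p dx ≤ c ρ^{−d} ∫_Q ‖Du(x)‖^p dx, where u_ρ = |C_ρ|^{−1} ∫_{C_ρ} u(x) dx is the average of u over the annulus C_ρ. -/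
open Filter Topology MeasureTheory Set Metric ENNReal

section Helpers

variable {d m : ℕ}

private lemma pk_coord_le_norm (x : EuclideanSpace ℝ (Fin d)) (i : Fin d) : |x i| ≤ ‖x‖ := by
  rw [EuclideanSpace.norm_eq]
  rw [show |x i| = Real.sqrt ((x i)^2) by rw [Real.sqrt_sq_eq_abs]]
  apply Real.sqrt_le_sqrt
  calc (x i)^2 = ‖x i‖^2 := by simp [Real.norm_eq_abs, sq_abs]
    _ ≤ ∑ j, ‖x j‖ ^ 2 := Finset.single_le_sum (f := fun j => ‖x j‖^2)
        (fun j _ => sq_nonneg _) (Finset.mem_univ i)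

private lemma pk_norm_le_sqrt_d (x : EuclideanSpace ℝ (Fin d)) (h : ∀ i, |x i| ≤ 1) :
    ‖x‖ ≤ Real.sqrt d := by
  rw [EuclideanSpace.norm_eq]
  apply Real.sqrt_le_sqrt
  calc ∑ i, ‖x i‖ ^ 2 ≤ ∑ i : Fin d, (1:ℝ) := by
        apply Finset.sum_le_sum; intro i _
        have h2 : ‖x i‖ ≤ 1 := by rw [Real.norm_eq_abs]; exact h i
        nlinarith [norm_nonneg (x i)]
    _ = d := by simp

private lemma pk_convex_Q :
    Convex ℝ {x : EuclideanSpace ℝ (Fin d) | ∀ i, x i ∈ Ioo (-(1/2):ℝ) (1/2)} := by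
  have : {x : EuclideanSpace ℝ (Fin d) | ∀ i, x i ∈ Ioo (-(1/2):ℝ) (1/2)}
      = ⋂ i, (EuclideanSpace.proj i) ⁻¹' (Ioo (-(1/2):ℝ) (1/2)) := by
    ext x; simp [EuclideanSpace.proj]
  rw [this]
  exact convex_iInter fun i => (convex_Ioo _ _).linear_preimage _

private lemma pk_measurable_Q :
    MeasurableSet {x : EuclideanSpace ℝ (Fin d) | ∀ i, x i ∈ Ioo (-(1/2):ℝ) (1/2)} := by
  have : {x : EuclideanSpace ℝ (Fin d) | ∀ i, x i ∈ Ioo (-(1/2):ℝ) (1/2)}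
      = ⋂ i, (fun x : EuclideanSpace ℝ (Fin d) => x i) ⁻¹' (Ioo (-(1/2):ℝ) (1/2)) := by
    ext x; simp
  rw [this]
  exact MeasurableSet.iInter fun i =>
    ((continuous_apply i).comp
      (EuclideanSpace.equiv (Fin d) ℝ).toHomeomorph.continuous).measurable measurableSet_Ioo

private lemma pk_volume_Q :
    volume {x : EuclideanSpace ℝ (Fin d) | ∀ i, x i ∈ Ioo (-(1/2):ℝ) (1/2)} = 1 := by
  have h := EuclideanSpace.volume_preserving_symm_measurableEquiv_toLp (Fin d)
  have hs : {x : EuclideanSpace ℝ (Fin d) | ∀ i, x i ∈ Ioo (-(1/2):ℝ) (1/2)}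
      = (MeasurableEquiv.toLp 2 (Fin d → ℝ)).symm ⁻¹' (univ.pi fun _ => Ioo (-(1/2):ℝ) (1/2)) := by
    ext x
    simp [Set.mem_pi]
  rw [hs, h.measure_preimage (MeasurableSet.univ_pi fun _ => measurableSet_Ioo).nullMeasurableSet,
    volume_pi_pi]
  simp [Real.volume_Ioo]
  norm_num

private lemma pk_lint_affine (F : EuclideanSpace ℝ (Fin d) → ℝ≥0∞) (hF : Measurable F)
    (a : EuclideanSpace ℝ (Fin d)) {c : ℝ} (hc : c ≠ 0) :
    ∫⁻ x, F (a + c • x) = ENNReal.ofReal (|c| ^ d)⁻¹ * ∫⁻ z, F z := by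
  have h1 : ∫⁻ x, F (a + c • x) = ∫⁻ y, F (a + y) ∂(Measure.map (c • ·) volume) := by
    rw [lintegral_map (by exact hF.comp (measurable_const_add a)) (measurable_const_smul c)]
  rw [h1, MeasureTheory.Measure.map_addHaar_smul volume hc]
  simp only [lintegral_smul_measure]
  congr 1
  · congr 1
    rw [abs_inv, abs_pow]
    simp [finrank_euclideanSpace]
  · exact lintegral_add_left_eq_self F a

private lemma pk_cont_rpow {p : ℝ} (hp : 1 ≤ p) : Continuous fun x : ℝ => x ^ p := by
  rw [continuous_iff_continuousAt]
  intro x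
  exact Real.continuousAt_rpow_const x p (Or.inr (by linarith))

private lemma pk_jensen_int {α : Type*} [MeasurableSpace α] (μ : Measure α) [IsFiniteMeasure μ]
    [NeZero μ] {p : ℝ} (hp : 1 ≤ p) (f : α → ℝ) (hf0 : ∀ x, 0 ≤ f x)
    (hfi : Integrable f μ) (hfpi : Integrable (fun x => f x ^ p) μ) :
    (∫ x, f x ∂μ) ^ p ≤ ((μ univ).toReal) ^ (p - 1) * ∫ x, f x ^ p ∂μ := by
  have hM : 0 < (μ univ).toReal := by
    refine ENNReal.toReal_pos (by simpa using NeZero.ne μ) (measure_ne_top _ _)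
  set M := (μ univ).toReal with hMdef
  have havg : (⨍ x, f x ∂μ) ^ p ≤ ⨍ x, f x ^ p ∂μ := by
    refine (convexOn_rpow hp).map_average_le ((pk_cont_rpow hp).continuousOn) isClosed_Ici
      (Eventually.of_forall fun x => hf0 x) hfi hfpi
  rw [average_eq, average_eq, measureReal_def, ← hMdef] at havg
  have h1 : (M⁻¹ * ∫ x, f x ∂μ) ^ p = M⁻¹ ^ p * (∫ x, f x ∂μ) ^ p := by
    rw [Real.mul_rpow (by positivity) (integral_nonneg hf0)]
  rw [smul_eq_mul, smul_eq_mul, h1] at havg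
  have h2 : (∫ x, f x ∂μ) ^ p ≤ M ^ p * (M⁻¹ * ∫ x, f x ^ p ∂μ) := by
    calc (∫ x, f x ∂μ) ^ p = M ^ p * (M⁻¹ ^ p * (∫ x, f x ∂μ) ^ p) := by
          rw [← mul_assoc, ← Real.mul_rpow hM.le (by positivity), mul_inv_cancel₀ hM.ne',
            Real.one_rpow, one_mul]
      _ ≤ M ^ p * (M⁻¹ * ∫ x, f x ^ p ∂μ) := by
          apply mul_le_mul_of_nonneg_left havg (Real.rpow_nonneg hM.le p)
  calc (∫ x, f x ∂μ) ^ p ≤ M ^ p * (M⁻¹ * ∫ x, f x ^ p ∂μ) := h2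
    _ = M ^ (p-1) * ∫ x, f x ^ p ∂μ := by
        rw [← mul_assoc]
        congr 1
        rw [Real.rpow_sub hM, Real.rpow_one]
        field_simp

private lemma pk_ftc_seg (u : EuclideanSpace ℝ (Fin d) → EuclideanSpace ℝ (Fin m))
    (hu : ContDiff ℝ 1 u) (x y : EuclideanSpace ℝ (Fin d)) :
    ‖u x - u y‖ ≤ ‖x - y‖ * ∫ t in (0:ℝ)..1, ‖fderiv ℝ u (y + t • (x - y))‖ := by
  set γ : ℝ → EuclideanSpace ℝ (Fin d) := fun t => y + t • (x - y) with hγ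
  have hγc : Continuous γ := by continuity
  have hDu : Continuous (fderiv ℝ u) := hu.continuous_fderiv one_ne_zero
  have hder : ∀ t : ℝ, HasDerivAt (fun s => u (γ s)) (fderiv ℝ u (γ t) (x - y)) t := by
    intro t
    have h1 : HasDerivAt γ (x - y) t := by
      simpa [γ] using ((hasDerivAt_id t).smul_const (x - y)).const_add y
    have h2 : HasFDerivAt u (fderiv ℝ u (γ t)) (γ t) :=
      (hu.differentiable one_ne_zero).differentiableAt.hasFDerivAt
    exact h2.comp_hasDerivAt t h1
  have hcont : Continuous fun t => fderiv ℝ u (γ t) (x - y) := by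
    exact (ContinuousLinearMap.apply ℝ _ (x - y)).continuous.comp (hDu.comp hγc)
  have key : u x - u y = ∫ t in (0:ℝ)..1, fderiv ℝ u (γ t) (x - y) := by
    have := intervalIntegral.integral_eq_sub_of_hasDerivAt (f := fun s => u (γ s))
      (fun t _ => hder t) (hcont.intervalIntegrable 0 1)
    rw [this]
    simp [γ]
  rw [key]
  calc ‖∫ t in (0:ℝ)..1, fderiv ℝ u (γ t) (x - y)‖
      ≤ ∫ t in (0:ℝ)..1, ‖fderiv ℝ u (γ t) (x - y)‖ :=
        intervalIntegral.norm_integral_le_integral_norm (by norm_num)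
    _ ≤ ∫ t in (0:ℝ)..1, ‖fderiv ℝ u (γ t)‖ * ‖x - y‖ := by
        apply intervalIntegral.integral_mono_on (by norm_num)
        · exact (hcont.norm).intervalIntegrable 0 1
        · exact ((hDu.comp hγc).norm.mul continuous_const).intervalIntegrable 0 1
        · intro t _
          exact (fderiv ℝ u (γ t)).le_opNorm _
    _ = ‖x - y‖ * ∫ t in (0:ℝ)..1, ‖fderiv ℝ u (γ t)‖ := by
        simp_rw [mul_comm]
        exact intervalIntegral.integral_const_mul _ _

private lemma pk_stepB (u : EuclideanSpace ℝ (Fin d) → EuclideanSpace ℝ (Fin m))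
    (hu : ContDiff ℝ 1 u) {p : ℝ} (hp : 1 ≤ p)
    (x y : EuclideanSpace ℝ (Fin d)) (hxy : ‖x - y‖ ≤ Real.sqrt d) :
    ‖u x - u y‖ ^ p ≤ Real.sqrt d ^ p *
      ∫ t in Ioc (0:ℝ) 1, ‖fderiv ℝ u (y + t • (x - y))‖ ^ p := by
  set ψ : ℝ → ℝ := fun t => ‖fderiv ℝ u (y + t • (x - y))‖ with hψ
  have hψc : Continuous ψ := by
    have hDu : Continuous (fderiv ℝ u) := hu.continuous_fderiv one_ne_zero
    exact (hDu.comp (by continuity)).norm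
  have hψ0 : ∀ t, 0 ≤ ψ t := fun t => norm_nonneg _
  have hI0 : 0 ≤ ∫ t in Ioc (0:ℝ) 1, ψ t := integral_nonneg hψ0
  have h1 : ‖u x - u y‖ ≤ Real.sqrt d * ∫ t in Ioc (0:ℝ) 1, ψ t := by
    have h := pk_ftc_seg u hu x y
    rw [intervalIntegral.integral_of_le (by norm_num)] at h
    refine h.trans ?_
    exact mul_le_mul_of_nonneg_right hxy hI0
  have h2 : ‖u x - u y‖ ^ p ≤ (Real.sqrt d * ∫ t in Ioc (0:ℝ) 1, ψ t) ^ p :=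
    Real.rpow_le_rpow (norm_nonneg _) h1 (by linarith)
  have h3 : (Real.sqrt d * ∫ t in Ioc (0:ℝ) 1, ψ t) ^ p
      = Real.sqrt d ^ p * (∫ t in Ioc (0:ℝ) 1, ψ t) ^ p :=
    Real.mul_rpow (Real.sqrt_nonneg _) hI0
  have hμ : (volume.restrict (Ioc (0:ℝ) 1)) univ = 1 := by
    rw [Measure.restrict_apply_univ, Real.volume_Ioc]; norm_num
  haveI : IsFiniteMeasure (volume.restrict (Ioc (0:ℝ) 1)) := ⟨by rw [hμ]; exact one_lt_top⟩
  haveI : NeZero (volume.restrict (Ioc (0:ℝ) 1)) := ⟨by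
    intro h; rw [h] at hμ; simp at hμ⟩
  have h4 : (∫ t in Ioc (0:ℝ) 1, ψ t) ^ p ≤ ∫ t in Ioc (0:ℝ) 1, ψ t ^ p := by
    have := pk_jensen_int (volume.restrict (Ioc (0:ℝ) 1)) hp ψ hψ0
      (hψc.integrableOn_Ioc) ((pk_cont_rpow hp).comp hψc |>.integrableOn_Ioc)
    rw [hμ] at this
    simpa using this
  calc ‖u x - u y‖ ^ p ≤ (Real.sqrt d * ∫ t in Ioc (0:ℝ) 1, ψ t) ^ p := h2
    _ = Real.sqrt d ^ p * (∫ t in Ioc (0:ℝ) 1, ψ t) ^ p := h3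
    _ ≤ Real.sqrt d ^ p * ∫ t in Ioc (0:ℝ) 1, ψ t ^ p := by
        apply mul_le_mul_of_nonneg_left h4 (Real.rpow_nonneg (Real.sqrt_nonneg _) p)

private lemma pk_stepA (u : EuclideanSpace ℝ (Fin d) → EuclideanSpace ℝ (Fin m)) {p : ℝ}
    (hp : 1 ≤ p) (C : Set (EuclideanSpace ℝ (Fin d))) (x : EuclideanSpace ℝ (Fin d))
    (h0 : volume C ≠ 0) (hfin : volume C ≠ ⊤)
    (hui : IntegrableOn u C volume)
    (hfi : IntegrableOn (fun y => ‖u x - u y‖) C volume)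
    (hfpi : IntegrableOn (fun y => ‖u x - u y‖ ^ p) C volume) :
    ‖u x - (volume C).toReal⁻¹ • ∫ y in C, u y‖ ^ p
      ≤ (volume C).toReal⁻¹ * ∫ y in C, ‖u x - u y‖ ^ p := by
  set M := (volume C).toReal with hM
  have hMpos : 0 < M := ENNReal.toReal_pos h0 hfin
  haveI : IsFiniteMeasure (volume.restrict C) :=
    ⟨by rw [Measure.restrict_apply_univ]; exact hfin.lt_top⟩
  haveI : NeZero (volume.restrict C) := ⟨by
    intro h
    apply h0
    have := congrArg (fun μ : Measure (EuclideanSpace ℝ (Fin d)) => μ univ) h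
    simpa [Measure.restrict_apply_univ] using this⟩
  have hconst : IntegrableOn (fun _ : EuclideanSpace ℝ (Fin d) => u x) C volume := by
    exact integrableOn_const hfin
  have key : u x - M⁻¹ • ∫ y in C, u y = M⁻¹ • ∫ y in C, (u x - u y) := by
    rw [integral_sub hconst hui, setIntegral_const, measureReal_def, ← hM, smul_sub, smul_smul,
      inv_mul_cancel₀ hMpos.ne', one_smul]
  have h1 : ‖u x - M⁻¹ • ∫ y in C, u y‖ ≤ M⁻¹ * ∫ y in C, ‖u x - u y‖ := by
    rw [key, norm_smul, Real.norm_eq_abs, abs_of_nonneg (by positivity)]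
    exact mul_le_mul_of_nonneg_left (norm_integral_le_integral_norm _) (by positivity)
  have hI0 : 0 ≤ ∫ y in C, ‖u x - u y‖ := integral_nonneg fun y => norm_nonneg _
  have h2 : ‖u x - M⁻¹ • ∫ y in C, u y‖ ^ p ≤ (M⁻¹)^p * (∫ y in C, ‖u x - u y‖)^p := by
    rw [← Real.mul_rpow (by positivity) hI0]
    exact Real.rpow_le_rpow (norm_nonneg _) h1 (by linarith)
  have h3 : (∫ y in C, ‖u x - u y‖)^p ≤ M ^ (p-1) * ∫ y in C, ‖u x - u y‖ ^ p := by
    have := pk_jensen_int (volume.restrict C) hp (fun y => ‖u x - u y‖)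
      (fun y => norm_nonneg _) hfi hfpi
    simpa [Measure.restrict_apply_univ] using this
  have h4 : (M⁻¹)^p * (M ^ (p-1)) = M⁻¹ := by
    rw [← Real.rpow_neg_one M, ← Real.rpow_mul hMpos.le, ← Real.rpow_add hMpos]
    congr 1
    ring
  calc ‖u x - M⁻¹ • ∫ y in C, u y‖ ^ p ≤ (M⁻¹)^p * (∫ y in C, ‖u x - u y‖)^p := h2
    _ ≤ (M⁻¹)^p * (M ^ (p-1) * ∫ y in C, ‖u x - u y‖ ^ p) := by
        apply mul_le_mul_of_nonneg_left h3 (Real.rpow_nonneg (by positivity) p)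
    _ = M⁻¹ * ∫ y in C, ‖u x - u y‖ ^ p := by rw [← mul_assoc, h4]

end Helpers

set_option maxHeartbeats 1000000 in
/-- scaled Poincaré inequality on the unit cube
`Q = (−1/2, 1/2)^d`, with the mean taken over the concentric annulus
`C_ρ = B(0, ρ/4) \ closure(B(0, ρ/16))`: there is `c = c(p,d) > 0` such that for every
`C¹` map `u : Q → ℝ^m` with `∫_Q ‖Du‖^p < ∞` and every `ρ ∈ (0,1)`,
`∫_Q ‖u − u_ρ‖^p ≤ c ρ^{−d} ∫_Q ‖Du‖^p`, where `u_ρ` is the average of `u` on `C_ρ`. -/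
theorem stmt_11 (d m : ℕ) (hd : 1 ≤ d) (hm : 1 ≤ m) (p : ℝ) (hp : 1 ≤ p) :
    ∃ c : ℝ, 0 < c ∧
      ∀ u : EuclideanSpace ℝ (Fin d) → EuclideanSpace ℝ (Fin m), ContDiff ℝ 1 u →
        IntegrableOn (fun x => ‖fderiv ℝ u x‖ ^ p)
          {x : EuclideanSpace ℝ (Fin d) | ∀ i, x i ∈ Ioo (-(1 / 2) : ℝ) (1 / 2)} volume →
        ∀ ρ ∈ Ioo (0 : ℝ) 1,
          (∫ x in {x : EuclideanSpace ℝ (Fin d) | ∀ i, x i ∈ Ioo (-(1 / 2) : ℝ) (1 / 2)},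
              ‖u x - (volume (Metric.ball (0 : EuclideanSpace ℝ (Fin d)) (ρ / 4) \
                        Metric.closedBall 0 (ρ / 16))).toReal⁻¹ •
                      ∫ y in Metric.ball (0 : EuclideanSpace ℝ (Fin d)) (ρ / 4) \
                        Metric.closedBall 0 (ρ / 16), u y‖ ^ p)
            ≤ c / ρ ^ d *
              ∫ x in {x : EuclideanSpace ℝ (Fin d) | ∀ i, x i ∈ Ioo (-(1 / 2) : ℝ) (1 / 2)},
                ‖fderiv ℝ u x‖ ^ p := by
  classical
  have hdpos : (0:ℝ) < d := by exact_mod_cast hd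
  haveI : Nontrivial (EuclideanSpace ℝ (Fin d)) := by
    apply Module.nontrivial_of_finrank_pos (R := ℝ)
      (h := by rw [finrank_euclideanSpace_fin]; omega)
  set Q : Set (EuclideanSpace ℝ (Fin d)) :=
    {x : EuclideanSpace ℝ (Fin d) | ∀ i, x i ∈ Ioo (-(1 / 2) : ℝ) (1 / 2)} with hQdef
  set B : ℝ≥0∞ := volume (ball (0 : EuclideanSpace ℝ (Fin d)) 1) with hBdef
  have hB0 : B ≠ 0 := (measure_ball_pos volume 0 one_pos).ne'
  have hBfin : B ≠ ⊤ := measure_ball_lt_top.ne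
  set κ : ℝ := (1/4:ℝ)^d - (1/16:ℝ)^d with hκdef
  have hκpos : 0 < κ := by
    have : (1/16:ℝ)^d < (1/4:ℝ)^d := by
      apply pow_lt_pow_left₀ (by norm_num) (by norm_num)
      omega
    simp only [hκdef]; linarith
  set K : ℝ≥0∞ := ENNReal.ofReal κ * B with hKdef
  have hK0 : K ≠ 0 := by
    exact mul_ne_zero (ENNReal.ofReal_pos.2 hκpos).ne' hB0
  have hKfin : K ≠ ⊤ := ENNReal.mul_ne_top ENNReal.ofReal_ne_top hBfin
  have hKtR : 0 < K.toReal := ENNReal.toReal_pos hK0 hKfin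
  have hsd : 0 < Real.sqrt d := Real.sqrt_pos.2 hdpos
  refine ⟨Real.sqrt d ^ p * 2 ^ d * 2 * K.toReal⁻¹, by positivity, ?_⟩
  intro u hu hint ρ hρ
  obtain ⟨hρ0, hρ1⟩ := hρ
  set c : ℝ := Real.sqrt d ^ p * 2 ^ d * 2 * K.toReal⁻¹ with hcdef
  set C : Set (EuclideanSpace ℝ (Fin d)) :=
    ball (0 : EuclideanSpace ℝ (Fin d)) (ρ / 4) \ closedBall 0 (ρ / 16) with hCdef
  -- volume of C
  have hMC : volume C = ENNReal.ofReal (ρ ^ d) * K := by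
    have hsub : closedBall (0 : EuclideanSpace ℝ (Fin d)) (ρ / 16) ⊆ ball 0 (ρ / 4) := by
      intro z hz
      simp only [mem_closedBall, mem_ball, dist_zero_right] at *
      linarith
    rw [hCdef, measure_diff hsub measurableSet_closedBall.nullMeasurableSet
      measure_closedBall_lt_top.ne,
      Measure.addHaar_ball volume 0 (by positivity : (0:ℝ) ≤ ρ / 4),
      Measure.addHaar_closedBall volume 0 (by positivity : (0:ℝ) ≤ ρ / 16),
      finrank_euclideanSpace_fin]
    rw [← ENNReal.sub_mul (fun _ _ => hBfin), ← ENNReal.ofReal_sub _ (by positivity),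
      hKdef, ← mul_assoc, ← ENNReal.ofReal_mul (by positivity)]
    congr 2
    rw [hκdef]
    ring
  have hC0 : volume C ≠ 0 := by
    rw [hMC]
    exact mul_ne_zero (ENNReal.ofReal_pos.2 (by positivity)).ne' hK0
  have hCfin : volume C ≠ ⊤ := by
    rw [hMC]; exact ENNReal.mul_ne_top ENNReal.ofReal_ne_top hKfin
  have hCsub : C ⊆ Q := by
    intro y hy
    have hyb : ‖y‖ < ρ / 4 := by
      have := hy.1
      simpa [mem_ball, dist_zero_right] using this
    intro i
    have h1 : |y i| ≤ ‖y‖ := pk_coord_le_norm y i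
    have h2 : |y i| < 1/2 := by
      have : ρ / 4 < 1/2 := by linarith
      linarith
    constructor <;> [skip; skip] <;> cases' abs_lt.1 h2 with ha hb <;> linarith
  have hMC1 : volume C ≤ 1 := le_trans (measure_mono hCsub) (le_of_eq pk_volume_Q)
  -- functions
  have huc : Continuous u := hu.continuous
  have hDu : Continuous (fderiv ℝ u) := hu.continuous_fderiv one_ne_zero
  set g : EuclideanSpace ℝ (Fin d) → ℝ := fun z => ‖fderiv ℝ u z‖ ^ p with hgdef
  have hgc : Continuous g := (pk_cont_rpow hp).comp hDu.norm
  have hg0 : ∀ z, 0 ≤ g z := fun z => Real.rpow_nonneg (norm_nonneg _) p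
  set F : EuclideanSpace ℝ (Fin d) → ℝ≥0∞ :=
    Q.indicator (fun z => ENNReal.ofReal (g z)) with hFdef
  have hFm : Measurable F :=
    (ENNReal.measurable_ofReal.comp hgc.measurable).indicator pk_measurable_Q
  set A : ℝ≥0∞ := ∫⁻ z in Q, ENNReal.ofReal (g z) with hAdef
  have hFA : ∫⁻ z, F z = A := by
    rw [hFdef, lintegral_indicator pk_measurable_Q]
  have hAfin : A ≠ ⊤ := by
    have h1 := hint.2
    rw [hasFiniteIntegral_iff_ofReal (Eventually.of_forall hg0)] at h1
    exact h1.ne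
  -- the average
  set avg : EuclideanSpace ℝ (Fin m) := (volume C).toReal⁻¹ • ∫ y in C, u y with havgdef
  set h : EuclideanSpace ℝ (Fin d) → ℝ := fun x => ‖u x - avg‖ ^ p with hhdef
  have hhc : Continuous h := (pk_cont_rpow hp).comp (huc.sub continuous_const).norm
  have hh0 : ∀ x, 0 ≤ h x := fun x => Real.rpow_nonneg (norm_nonneg _) p
  set T : ℝ≥0∞ := ∫⁻ x in Q, ENNReal.ofReal (h x) with hTdef
  -- integrabilities on C
  have hCcb : C ⊆ closedBall (0 : EuclideanSpace ℝ (Fin d)) (ρ/4) :=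
    (diff_subset).trans ball_subset_closedBall
  have hInt : ∀ v : EuclideanSpace ℝ (Fin d) → ℝ, Continuous v → IntegrableOn v C volume :=
    fun v hv => ((hv.continuousOn).integrableOn_compact (isCompact_closedBall _ _)).mono_set hCcb
  have huiC : IntegrableOn u C volume :=
    ((huc.continuousOn).integrableOn_compact (isCompact_closedBall 0 (ρ/4))).mono_set hCcb
  -- the triple-integral kernel
  set D : ℝ≥0∞ := ENNReal.ofReal (Real.sqrt d ^ p) with hDdef
  set W : EuclideanSpace ℝ (Fin d) → Set ℝ → ℝ≥0∞ := fun x S =>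
    ∫⁻ y in C, ∫⁻ t in S, F (y + t • (x - y)) with hWdef
  -- measurability of kernels
  have hker : ∀ S : Set ℝ, Measurable fun q : (EuclideanSpace ℝ (Fin d) × EuclideanSpace ℝ (Fin d)) =>
      ∫⁻ t in S, F (q.2 + t • (q.1 - q.2)) := by
    intro S
    apply Measurable.lintegral_prod_right'
      (f := fun q : (EuclideanSpace ℝ (Fin d) × EuclideanSpace ℝ (Fin d)) × ℝ =>
        F (q.1.2 + q.2 • (q.1.1 - q.1.2)))
    exact hFm.comp (by fun_prop)
  have hWm : ∀ S : Set ℝ, Measurable fun x => W x S := by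
    intro S
    apply Measurable.lintegral_prod_right' (f := fun q :
      (EuclideanSpace ℝ (Fin d) × EuclideanSpace ℝ (Fin d)) =>
      ∫⁻ t in S, F (q.2 + t • (q.1 - q.2)))
    exact hker S
  -- pointwise step for x ∈ Q
  have hxQstep : ∀ x ∈ Q, ENNReal.ofReal (h x) ≤ (volume C)⁻¹ * (D * W x (Ioc 0 1)) := by
    intro x hx
    have hfiC : IntegrableOn (fun y => ‖u x - u y‖) C volume :=
      hInt _ ((continuous_const.sub huc).norm)
    have hfpiC : IntegrableOn (fun y => ‖u x - u y‖ ^ p) C volume :=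
      hInt _ ((pk_cont_rpow hp).comp (continuous_const.sub huc).norm)
    have sA := pk_stepA u hp C x hC0 hCfin huiC hfiC hfpiC
    have e1 : ENNReal.ofReal (h x) ≤
        ENNReal.ofReal ((volume C).toReal⁻¹ * ∫ y in C, ‖u x - u y‖ ^ p) :=
      ENNReal.ofReal_le_ofReal sA
    have e2 : ENNReal.ofReal ((volume C).toReal⁻¹ * ∫ y in C, ‖u x - u y‖ ^ p)
        = (volume C)⁻¹ * ENNReal.ofReal (∫ y in C, ‖u x - u y‖ ^ p) := by
      rw [ENNReal.ofReal_mul (by positivity)]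
      congr 1
      rw [ENNReal.ofReal_inv_of_pos (ENNReal.toReal_pos hC0 hCfin),
        ENNReal.ofReal_toReal hCfin]
    have e3 : ENNReal.ofReal (∫ y in C, ‖u x - u y‖ ^ p)
        = ∫⁻ y in C, ENNReal.ofReal (‖u x - u y‖ ^ p) :=
      ofReal_integral_eq_lintegral_ofReal hfpiC
        (Eventually.of_forall fun y => Real.rpow_nonneg (norm_nonneg _) p)
    -- inner bound in y
    have hCm : MeasurableSet C := measurableSet_ball.diff measurableSet_closedBall
    have e4 : ∫⁻ y in C, ENNReal.ofReal (‖u x - u y‖ ^ p)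
        ≤ ∫⁻ y in C, D * ∫⁻ t in Ioc (0:ℝ) 1, F (y + t • (x - y)) := by
      apply setLIntegral_mono' hCm
      intro y hy
      have hyQ : y ∈ Q := hCsub hy
      have hxy : ‖x - y‖ ≤ Real.sqrt d := by
        apply pk_norm_le_sqrt_d
        intro i
        have h1 := (hx i).1
        have h2 := (hx i).2
        have h3 := (hyQ i).1
        have h4 := (hyQ i).2
        have : (x - y) i = x i - y i := by
          simp [PiLp.sub_apply]
        rw [this, abs_le]
        constructor <;> linarith
      have sB := pk_stepB u hu hp x y hxy
      have hγc : Continuous fun t : ℝ => y + t • (x - y) :=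
        continuous_const.add (continuous_id.smul continuous_const)
      have hψpc : Continuous fun t : ℝ => ‖fderiv ℝ u (y + t • (x - y))‖ ^ p :=
        (pk_cont_rpow hp).comp ((hDu.comp hγc).norm)
      calc ENNReal.ofReal (‖u x - u y‖ ^ p)
          ≤ ENNReal.ofReal (Real.sqrt d ^ p *
              ∫ t in Ioc (0:ℝ) 1, ‖fderiv ℝ u (y + t • (x - y))‖ ^ p) :=
            ENNReal.ofReal_le_ofReal sB
        _ = D * ENNReal.ofReal (∫ t in Ioc (0:ℝ) 1, ‖fderiv ℝ u (y + t • (x - y))‖ ^ p) := by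
            rw [ENNReal.ofReal_mul (by positivity)]
        _ = D * ∫⁻ t in Ioc (0:ℝ) 1, ENNReal.ofReal (‖fderiv ℝ u (y + t • (x - y))‖ ^ p) := by
            congr 1
            exact ofReal_integral_eq_lintegral_ofReal (hψpc.integrableOn_Ioc)
              (Eventually.of_forall fun t => Real.rpow_nonneg (norm_nonneg _) p)
        _ = D * ∫⁻ t in Ioc (0:ℝ) 1, F (y + t • (x - y)) := by
            congr 1
            apply setLIntegral_congr_fun measurableSet_Ioc
            intro t ht
            have hzQ : y + t • (x - y) ∈ Q := by
              have heq : y + t • (x - y) = (1 - t) • y + t • x := by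
                rw [smul_sub, sub_smul, one_smul]
                abel
              rw [heq]
              exact pk_convex_Q hyQ hx (by linarith [ht.2]) ht.1.le (by ring)
            rw [hFdef]
            exact (indicator_of_mem hzQ (fun z => ENNReal.ofReal (g z))).symm
    rw [e2, e3] at e1
    refine e1.trans ?_
    apply mul_le_mul_right ?_ _
    calc ∫⁻ y in C, ENNReal.ofReal (‖u x - u y‖ ^ p)
        ≤ ∫⁻ y in C, D * ∫⁻ t in Ioc (0:ℝ) 1, F (y + t • (x - y)) := e4
      _ = D * W x (Ioc 0 1) := lintegral_const_mul' D _ ENNReal.ofReal_ne_top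
  -- global bound
  have hT1 : T ≤ (volume C)⁻¹ * (D * ∫⁻ x in Q, W x (Ioc 0 1)) := by
    calc T ≤ ∫⁻ x in Q, (volume C)⁻¹ * (D * W x (Ioc 0 1)) :=
          setLIntegral_mono' pk_measurable_Q hxQstep
      _ = (volume C)⁻¹ * ∫⁻ x in Q, D * W x (Ioc 0 1) :=
          lintegral_const_mul' _ _ (ENNReal.inv_ne_top.2 hC0)
      _ = (volume C)⁻¹ * (D * ∫⁻ x in Q, W x (Ioc 0 1)) := by
          rw [lintegral_const_mul' D _ ENNReal.ofReal_ne_top]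
  -- splitting the t-integral
  have hkm : ∀ (S : Set ℝ) (x : EuclideanSpace ℝ (Fin d)),
      Measurable fun y => ∫⁻ t in S, F (y + t • (x - y)) :=
    fun S x => (hker S).comp measurable_prodMk_left
  have hsplit : ∀ x, W x (Ioc 0 1) = W x (Ioc 0 (1/2)) + W x (Ioc (1/2) 1) := by
    intro x
    have hin : ∀ y : EuclideanSpace ℝ (Fin d), (∫⁻ t in Ioc (0:ℝ) 1, F (y + t • (x - y)))
        = (∫⁻ t in Ioc (0:ℝ) (1/2), F (y + t • (x - y)))
          + ∫⁻ t in Ioc (1/2:ℝ) 1, F (y + t • (x - y)) := by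
      intro y
      rw [← Ioc_union_Ioc_eq_Ioc (by norm_num : (0:ℝ) ≤ 1/2) (by norm_num : (1/2:ℝ) ≤ 1),
        lintegral_union measurableSet_Ioc (Ioc_disjoint_Ioc_of_le le_rfl)]
    simp only [hWdef]
    rw [lintegral_congr hin, lintegral_add_left (hkm _ x)]
  -- the elementary inverse-power bound
  have hpow : ∀ s : ℝ, 1/2 ≤ s → ENNReal.ofReal (|s| ^ d)⁻¹ ≤ ENNReal.ofReal ((2:ℝ)^d) := by
    intro s hs
    apply ENNReal.ofReal_le_ofReal
    have h1 : (1/2:ℝ)^d ≤ |s|^d := by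
      apply pow_le_pow_left₀ (by norm_num)
      rw [abs_of_nonneg (by linarith)]
      exact hs
    have h2 : (0:ℝ) < (1/2:ℝ)^d := by positivity
    calc (|s| ^ d)⁻¹ ≤ ((1/2:ℝ)^d)⁻¹ := by
          apply inv_anti₀ h2 h1
      _ = (2:ℝ)^d := by
          rw [div_pow, one_pow, one_div, inv_inv]
  -- first piece
  have hJ1 : ∫⁻ x in Q, W x (Ioc 0 (1/2)) ≤ ENNReal.ofReal ((2:ℝ)^d) * A := by
    have hb : ∀ x : EuclideanSpace ℝ (Fin d), W x (Ioc 0 (1/2))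
        ≤ ENNReal.ofReal ((2:ℝ)^d) * A := by
      intro x
      have hswap : W x (Ioc 0 (1/2))
          = ∫⁻ t in Ioc (0:ℝ) (1/2), ∫⁻ y in C, F (y + t • (x - y)) := by
        simp only [hWdef]
        exact lintegral_lintegral_swap ((hFm.comp (by fun_prop)).aemeasurable)
      rw [hswap]
      calc ∫⁻ t in Ioc (0:ℝ) (1/2), ∫⁻ y in C, F (y + t • (x - y))
          ≤ ∫⁻ _ in Ioc (0:ℝ) (1/2), ENNReal.ofReal ((2:ℝ)^d) * A := by
            apply setLIntegral_mono' measurableSet_Ioc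
            intro t ht
            have hc : (1:ℝ) - t ≠ 0 := by
              have := ht.2; intro hcc; simp only [sub_eq_zero] at hcc; rw [← hcc] at this; norm_num at this
            calc ∫⁻ y in C, F (y + t • (x - y))
                ≤ ∫⁻ y, F (y + t • (x - y)) := setLIntegral_le_lintegral _ _
              _ = ∫⁻ y, F (t • x + (1-t) • y) := by
                  apply lintegral_congr
                  intro y
                  congr 1
                  rw [smul_sub, sub_smul, one_smul]
                  abel
              _ = ENNReal.ofReal (|1-t| ^ d)⁻¹ * ∫⁻ z, F z :=
                  pk_lint_affine F hFm (t • x) hc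
              _ ≤ ENNReal.ofReal ((2:ℝ)^d) * A := by
                  rw [hFA]
                  exact mul_le_mul_left (hpow _ (by linarith [ht.2])) A
        _ ≤ ENNReal.ofReal ((2:ℝ)^d) * A := by
            rw [setLIntegral_const]
            nth_rewrite 2 [← mul_one (ENNReal.ofReal ((2:ℝ)^d) * A)]
            apply mul_le_mul_right
            rw [Real.volume_Ioc]
            apply ENNReal.ofReal_le_one.2
            norm_num
    calc ∫⁻ x in Q, W x (Ioc 0 (1/2)) ≤ ∫⁻ _ in Q, ENNReal.ofReal ((2:ℝ)^d) * A :=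
          setLIntegral_mono' pk_measurable_Q (fun x _ => hb x)
      _ = ENNReal.ofReal ((2:ℝ)^d) * A := by
          rw [setLIntegral_const, pk_volume_Q, mul_one]
  -- second piece
  have hJ2 : ∫⁻ x in Q, W x (Ioc (1/2) 1) ≤ ENNReal.ofReal ((2:ℝ)^d) * A := by
    have hswap1 : ∫⁻ x in Q, W x (Ioc (1/2) 1)
        = ∫⁻ y in C, ∫⁻ x in Q, ∫⁻ t in Ioc (1/2:ℝ) 1, F (y + t • (x - y)) := by
      simp only [hWdef]
      exact lintegral_lintegral_swap (hker _).aemeasurable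
    rw [hswap1]
    have hb : ∀ y : EuclideanSpace ℝ (Fin d),
        (∫⁻ x in Q, ∫⁻ t in Ioc (1/2:ℝ) 1, F (y + t • (x - y)))
          ≤ ENNReal.ofReal ((2:ℝ)^d) * A := by
      intro y
      have hswap2 : (∫⁻ x in Q, ∫⁻ t in Ioc (1/2:ℝ) 1, F (y + t • (x - y)))
          = ∫⁻ t in Ioc (1/2:ℝ) 1, ∫⁻ x in Q, F (y + t • (x - y)) :=
        lintegral_lintegral_swap ((hFm.comp (by fun_prop)).aemeasurable)
      rw [hswap2]
      calc ∫⁻ t in Ioc (1/2:ℝ) 1, ∫⁻ x in Q, F (y + t • (x - y))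
          ≤ ∫⁻ _ in Ioc (1/2:ℝ) 1, ENNReal.ofReal ((2:ℝ)^d) * A := by
            apply setLIntegral_mono' measurableSet_Ioc
            intro t ht
            have hc : t ≠ 0 := by
              have := ht.1; intro hcc; rw [hcc] at this; norm_num at this
            calc ∫⁻ x in Q, F (y + t • (x - y))
                ≤ ∫⁻ x, F (y + t • (x - y)) := setLIntegral_le_lintegral _ _
              _ = ∫⁻ x, F ((y - t • y) + t • x) := by
                  apply lintegral_congr
                  intro x
                  congr 1
                  rw [smul_sub]
                  abel
              _ = ENNReal.ofReal (|t| ^ d)⁻¹ * ∫⁻ z, F z :=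
                  pk_lint_affine F hFm (y - t • y) hc
              _ ≤ ENNReal.ofReal ((2:ℝ)^d) * A := by
                  rw [hFA]
                  exact mul_le_mul_left (hpow _ ht.1.le) A
        _ ≤ ENNReal.ofReal ((2:ℝ)^d) * A := by
            rw [setLIntegral_const]
            nth_rewrite 2 [← mul_one (ENNReal.ofReal ((2:ℝ)^d) * A)]
            apply mul_le_mul_right
            rw [Real.volume_Ioc]
            apply ENNReal.ofReal_le_one.2
            norm_num
    calc ∫⁻ y in C, ∫⁻ x in Q, ∫⁻ t in Ioc (1/2:ℝ) 1, F (y + t • (x - y))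
        ≤ ∫⁻ _ in C, ENNReal.ofReal ((2:ℝ)^d) * A := by
          apply setLIntegral_mono' (measurableSet_ball.diff measurableSet_closedBall)
          exact fun y _ => hb y
      _ ≤ ENNReal.ofReal ((2:ℝ)^d) * A := by
          rw [setLIntegral_const]
          nth_rewrite 2 [← mul_one (ENNReal.ofReal ((2:ℝ)^d) * A)]
          exact mul_le_mul_right hMC1 _
  -- combine
  have hJ : ∫⁻ x in Q, W x (Ioc 0 1) ≤ 2 * (ENNReal.ofReal ((2:ℝ)^d) * A) := by
    rw [lintegral_congr hsplit, lintegral_add_left (hWm _)]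
    rw [two_mul]
    exact add_le_add hJ1 hJ2
  have hTfin : T ≤ ENNReal.ofReal (c / ρ^d) * A := by
    have h1 : T ≤ (volume C)⁻¹ * (D * (2 * (ENNReal.ofReal ((2:ℝ)^d) * A))) :=
      hT1.trans (mul_le_mul_right (mul_le_mul_right hJ D) _)
    refine h1.trans (le_of_eq ?_)
    have hMCinv : (volume C)⁻¹ = ENNReal.ofReal ((ρ^d)⁻¹) * K⁻¹ := by
      rw [hMC, ENNReal.mul_inv (Or.inl (ENNReal.ofReal_pos.2 (by positivity)).ne')
        (Or.inl ENNReal.ofReal_ne_top), ← ENNReal.ofReal_inv_of_pos (by positivity)]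
    have hKinv : K⁻¹ = ENNReal.ofReal (K.toReal⁻¹) := by
      rw [← ENNReal.ofReal_toReal hKfin, ← ENNReal.ofReal_inv_of_pos hKtR,
        ENNReal.ofReal_toReal hKfin]
    have h2 : ENNReal.ofReal (c / ρ^d)
        = ENNReal.ofReal (Real.sqrt d ^ p) * ENNReal.ofReal ((2:ℝ)^d) * 2
          * ENNReal.ofReal (K.toReal⁻¹) * ENNReal.ofReal ((ρ^d)⁻¹) := by
      rw [hcdef, div_eq_mul_inv]
      rw [show (2:ℝ≥0∞) = ENNReal.ofReal (2:ℝ) by simp]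
      rw [← ENNReal.ofReal_mul (by positivity), ← ENNReal.ofReal_mul (by positivity),
        ← ENNReal.ofReal_mul (by positivity), ← ENNReal.ofReal_mul (by positivity)]
    rw [hMCinv, hKinv, hDdef, h2]
    ring
  -- conversion back to real integrals
  have hL : (∫ x in Q, h x) = T.toReal := by
    rw [hTdef, integral_eq_lintegral_of_nonneg_ae (Eventually.of_forall hh0)
      hhc.aestronglyMeasurable.restrict]
  have hR : (∫ x in Q, g x) = A.toReal := by
    rw [hAdef, integral_eq_lintegral_of_nonneg_ae (Eventually.of_forall hg0)
      hgc.aestronglyMeasurable.restrict]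
  have hgoal : (∫ x in Q, h x) ≤ c / ρ^d * ∫ x in Q, g x := by
    rw [hL, hR]
    have hmono : T.toReal ≤ (ENNReal.ofReal (c / ρ^d) * A).toReal :=
      ENNReal.toReal_mono (ENNReal.mul_ne_top ENNReal.ofReal_ne_top hAfin) hTfin
    rwa [ENNReal.toReal_mul, ENNReal.toReal_ofReal (by positivity)] at hmono
  exact hgoal
end

section
/- Let Ψ : ℝ^d → ℝ^d be a C¹ diffeomorphism of ℝ^d onto itself (with everywhere invertible differential DΨ). Then for every continuous compactly supported f : ℝ^d → ℝ, the rescaled lattice sums over Ψ(εℤ^d) converge to a weighted integral: lim_{ε→0⁺} ε^d Σ_{i ∈ ℤ^d} f(Ψ(ε i)) = ∫_{ℝ^d} f(x) |det DΨ(Ψ^{−1}(x))|^{−1} dx. In particular ρ(x) = |det DΨ(Ψ^{−1}(x))|^{−1} is the asymptotic density of the deformed lattice Ψ(εℤ^d). -/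
open Filter Topology MeasureTheory

theorem riemann_pi (d : ℕ) (g : (Fin d → ℝ) → ℝ) (hc : Continuous g)
    (hs : HasCompactSupport g) :
    Tendsto (fun ε : ℝ => ε ^ d * ∑' i : Fin d → ℤ, g (fun k => ε * (i k : ℝ)))
      (𝓝[>] (0:ℝ)) (𝓝 (∫ x, g x)) := by
  have hgint : Integrable g := hc.integrable_of_hasCompactSupport hs
  set K : Set (Fin d → ℝ) := Metric.cthickening 1 (tsupport g) with hK
  have hKc : IsCompact K := hs.cthickening
  have hKm : MeasurableSet K := hKc.isClosed.measurableSet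
  set C : ℝ := (volume K).toReal with hC
  have hC0 : 0 ≤ C := ENNReal.toReal_nonneg
  rw [Metric.tendsto_nhds]
  intro η hη
  set η' : ℝ := η / (C + 1) with hη'
  have hη'0 : 0 < η' := div_pos hη (by linarith)
  obtain ⟨δ, hδ0, hδ⟩ := Metric.uniformContinuous_iff.mp
    (hs.uniformContinuous_of_continuous hc) η' hη'0
  filter_upwards [Ioo_mem_nhdsGT_of_mem
    (Set.left_mem_Ico.mpr (lt_min hδ0 one_pos))] with ε hεm
  obtain ⟨hε0, hεδ1⟩ := hεm
  have hεδ : ε < δ := lt_of_lt_of_le hεδ1 (min_le_left _ _)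
  have hε1 : ε ≤ 1 := le_of_lt (lt_of_lt_of_le hεδ1 (min_le_right _ _))
  set T : (Fin d → ℤ) → Set (Fin d → ℝ) :=
    fun i => Set.univ.pi fun k => Set.Ico (ε * i k) (ε * i k + ε) with hT
  have hmem : ∀ (i : Fin d → ℤ) (x : Fin d → ℝ), x ∈ T i ↔ ∀ k, ⌊x k / ε⌋ = i k := by
    intro i x
    simp only [hT, Set.mem_pi, Set.mem_univ, forall_true_left, Set.mem_Ico]
    refine forall_congr' fun k => ?_
    rw [Int.floor_eq_iff, le_div_iff₀ hε0, div_lt_iff₀ hε0]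
    constructor <;> rintro ⟨h1, h2⟩ <;> constructor <;> nlinarith
  have hTm : ∀ i, MeasurableSet (T i) :=
    fun i => MeasurableSet.univ_pi fun k => measurableSet_Ico
  have hTd : Pairwise (Function.onFun Disjoint T) := by
    intro i j hij
    rw [Function.onFun, Set.disjoint_left]
    intro x hxi hxj
    exact hij (funext fun k => ((hmem i x).mp hxi k).symm.trans ((hmem j x).mp hxj k))
  have hTu : (⋃ i, T i) = Set.univ := by
    ext x
    simp only [Set.mem_iUnion, Set.mem_univ, iff_true]
    exact ⟨fun k => ⌊x k / ε⌋, (hmem _ x).mpr fun k => rfl⟩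
  have hTvol : ∀ i, volume (T i) = ENNReal.ofReal (ε ^ d) := by
    intro i
    rw [hT]
    rw [volume_pi_pi]
    simp only [Real.volume_Ico, add_sub_cancel_left]
    rw [Finset.prod_const, ← ENNReal.ofReal_pow hε0.le]
    simp
  have hTvol' : ∀ i, (volume (T i)).toReal = ε ^ d := fun i => by
    rw [hTvol i, ENNReal.toReal_ofReal (pow_nonneg hε0.le d)]
  have hTfin : ∀ i, volume (T i) < ⊤ := fun i => by
    rw [hTvol]; exact ENNReal.ofReal_lt_top
  have hdist : ∀ (i : Fin d → ℤ) (x : Fin d → ℝ), x ∈ T i →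
      dist (fun k => ε * (i k : ℝ)) x ≤ ε := by
    intro i x hx
    rw [dist_pi_le_iff hε0.le]
    intro k
    have hk := hx k (Set.mem_univ k)
    obtain ⟨h1, h2⟩ := hk
    rw [Real.dist_eq, abs_le]
    constructor <;> linarith
  set h : (Fin d → ℝ) → ℝ := K.indicator fun _ => η' with hh
  have hhint : Integrable h :=
    (integrableOn_const hKc.measure_lt_top.ne).integrable_indicator hKm
  have hint_h : ∫ x, h x = η' * C := by
    rw [hh, integral_indicator hKm, setIntegral_const, smul_eq_mul, mul_comm, measureReal_def]
  have hptwise : ∀ (i : Fin d → ℤ), ∀ x ∈ T i,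
      |g (fun k => ε * (i k : ℝ)) - g x| ≤ h x := by
    intro i x hx
    by_cases hxK : x ∈ K
    · rw [hh, Set.indicator_of_mem hxK]
      have hd2 : dist (fun k => ε * (i k : ℝ)) x < δ :=
        lt_of_le_of_lt (hdist i x hx) hεδ
      have := hδ hd2
      rw [Real.dist_eq] at this
      exact this.le
    · rw [hh, Set.indicator_of_notMem hxK]
      have hxs : x ∉ tsupport g := fun hmem' =>
        hxK (Metric.self_subset_cthickening _ hmem')
      have hgx : g x = 0 := image_eq_zero_of_notMem_tsupport hxs
      have hgi : g (fun k => ε * (i k : ℝ)) = 0 := by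
        apply image_eq_zero_of_notMem_tsupport
        intro hmem'
        exact hxK (Metric.mem_cthickening_of_dist_le x _ 1 _ hmem'
          (by rw [dist_comm]; exact (hdist i x hx).trans hε1))
      rw [hgx, hgi, sub_zero, abs_zero]
  have hgT : ∀ i, IntegrableOn g (T i) := fun i => hgint.integrableOn
  have hconstT : ∀ (i : Fin d → ℤ) (c : ℝ), IntegrableOn (fun _ => c) (T i) :=
    fun i c => integrableOn_const (hTfin i).ne
  have hterm : ∀ i : Fin d → ℤ, ε ^ d * g (fun k => ε * (i k : ℝ))
      = (∫ x in T i, g x) + ∫ x in T i, (g (fun k => ε * (i k : ℝ)) - g x) := by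
    intro i
    rw [integral_sub (hconstT i _) (hgT i), setIntegral_const, measureReal_def, hTvol', smul_eq_mul]
    ring
  have hgsum : HasSum (fun i => ∫ x in T i, g x) (∫ x, g x) := by
    have := hasSum_integral_iUnion hTm hTd (hgint.integrableOn (s := ⋃ i, T i))
    rwa [hTu, setIntegral_univ] at this
  have hhsum : HasSum (fun i : Fin d → ℤ => ∫ x in T i, h x) (∫ x, h x) := by
    have := hasSum_integral_iUnion hTm hTd (hhint.integrableOn (s := ⋃ i, T i))
    rwa [hTu, setIntegral_univ] at this
  have hbound : ∀ i : Fin d → ℤ,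
      ‖∫ x in T i, (g (fun k => ε * (i k : ℝ)) - g x)‖ ≤ ∫ x in T i, h x := by
    intro i
    refine (norm_integral_le_integral_norm _).trans ?_
    refine setIntegral_mono_on ((hconstT i _).sub (hgT i)).norm
      hhint.integrableOn (hTm i) ?_
    intro x hx
    exact hptwise i x hx
  have hnormsum : Summable (fun i : Fin d → ℤ =>
      ‖∫ x in T i, (g (fun k => ε * (i k : ℝ)) - g x)‖) :=
    Summable.of_nonneg_of_le (fun i => norm_nonneg _) hbound hhsum.summable
  have hcsummable : Summable (fun i : Fin d → ℤ =>
      ∫ x in T i, (g (fun k => ε * (i k : ℝ)) - g x)) := hnormsum.of_norm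
  have hsum_eq : ε ^ d * ∑' i : Fin d → ℤ, g (fun k => ε * (i k : ℝ))
      = (∫ x, g x) + ∑' i : Fin d → ℤ, ∫ x in T i, (g (fun k => ε * (i k : ℝ)) - g x) := by
    rw [← tsum_mul_left]
    calc ∑' i : Fin d → ℤ, ε ^ d * g (fun k => ε * (i k : ℝ))
        = ∑' i : Fin d → ℤ, ((∫ x in T i, g x)
            + ∫ x in T i, (g (fun k => ε * (i k : ℝ)) - g x)) := tsum_congr hterm
      _ = _ := by rw [Summable.tsum_add hgsum.summable hcsummable, hgsum.tsum_eq]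
  rw [hsum_eq, dist_eq_norm, add_sub_cancel_left]
  calc ‖∑' i : Fin d → ℤ, ∫ x in T i, (g (fun k => ε * (i k : ℝ)) - g x)‖
      ≤ ∑' i : Fin d → ℤ, ‖∫ x in T i, (g (fun k => ε * (i k : ℝ)) - g x)‖ :=
        norm_tsum_le_tsum_norm hnormsum
    _ ≤ ∑' i : Fin d → ℤ, ∫ x in T i, h x :=
        Summable.tsum_le_tsum hbound hnormsum hhsum.summable
    _ = η' * C := by rw [hhsum.tsum_eq, hint_h]
    _ < η' * (C + 1) := mul_lt_mul_of_pos_left (lt_add_one C) hη'0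
    _ = η := by rw [hη']; field_simp

/-- if `Ψ : ℝ^d → ℝ^d` is a `C¹` diffeomorphism (bijective with everywhere
invertible differential), then for every continuous compactly supported `f : ℝ^d → ℝ` the
rescaled lattice sums over `Ψ(εℤ^d)` converge to the weighted integral:
`ε^d ∑_{i ∈ ℤ^d} f(Ψ(εi)) → ∫ f(x) |det DΨ(Ψ^{−1}(x))|^{−1} dx` as `ε → 0⁺`. -/
theorem stmt_12 (d : ℕ) (hd : 1 ≤ d)
    (Ψ : EuclideanSpace ℝ (Fin d) → EuclideanSpace ℝ (Fin d))
    (hΨ : ContDiff ℝ 1 Ψ) (hbij : Function.Bijective Ψ)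
    (hdet : ∀ x, (fderiv ℝ Ψ x).det ≠ 0)
    (f : EuclideanSpace ℝ (Fin d) → ℝ) (hf : Continuous f) (hsupp : HasCompactSupport f) :
    Tendsto
      (fun ε : ℝ => ε ^ d *
        ∑' i : Fin d → ℤ, f (Ψ (WithLp.toLp 2 (fun k => ε * (i k : ℝ)))))
      (𝓝[>] (0 : ℝ))
      (𝓝 (∫ x, f x * |(fderiv ℝ Ψ (Function.invFun Ψ x)).det|⁻¹)) := by
  -- Ψ is an open map, hence a homeomorphism
  have hopen : IsOpenMap Ψ := by
    have : ∀ x, HasStrictFDerivAt Ψ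
        (((fderiv ℝ Ψ x).toContinuousLinearEquivOfDetNeZero (hdet x) : _) :
          EuclideanSpace ℝ (Fin d) →L[ℝ] EuclideanSpace ℝ (Fin d)) x := by
      intro x
      have h1 : HasStrictFDerivAt Ψ (fderiv ℝ Ψ x) x :=
        (hΨ.contDiffAt).hasStrictFDerivAt one_ne_zero
      convert h1 using 2
      exact ContinuousLinearMap.coe_toContinuousLinearEquivOfDetNeZero _ _
    exact isOpenMap_of_hasStrictFDerivAt_equiv this
  let e : EuclideanSpace ℝ (Fin d) ≃ₜ EuclideanSpace ℝ (Fin d) :=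
    Equiv.toHomeomorphOfContinuousOpen (Equiv.ofBijective Ψ hbij) hΨ.continuous hopen
  have hfsupp : HasCompactSupport (f ∘ Ψ) := hsupp.comp_homeomorph e
  -- transfer to the Pi type
  let Φ : (Fin d → ℝ) ≃ₜ EuclideanSpace ℝ (Fin d) :=
    (EuclideanSpace.equiv (Fin d) ℝ).toHomeomorph.symm
  let g' : (Fin d → ℝ) → ℝ := (f ∘ Ψ) ∘ Φ
  have hg'c : Continuous g' := (hf.comp hΨ.continuous).comp Φ.continuous
  have hg's : HasCompactSupport g' := hfsupp.comp_homeomorph Φ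
  -- change of variables
  have hCoV : (∫ x, f x * |(fderiv ℝ Ψ (Function.invFun Ψ x)).det|⁻¹)
      = ∫ y, f (Ψ y) := by
    have key := integral_image_eq_integral_abs_det_fderiv_smul
      (volume : Measure (EuclideanSpace ℝ (Fin d))) MeasurableSet.univ
      (f' := fun x => fderiv ℝ Ψ x)
      (fun x _ => ((hΨ.differentiable one_ne_zero x).hasFDerivAt).hasFDerivWithinAt)
      (hbij.injective.injOn)
      (fun x => f x * |(fderiv ℝ Ψ (Function.invFun Ψ x)).det|⁻¹)
    rw [Set.image_univ, hbij.surjective.range_eq] at key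
    rw [setIntegral_univ, setIntegral_univ] at key
    rw [key]
    congr 1
    ext y
    rw [Function.leftInverse_invFun hbij.injective y]
    rw [smul_eq_mul]
    have h0 : |(fderiv ℝ Ψ y).det| ≠ 0 := abs_ne_zero.mpr (hdet y)
    field_simp
  -- transfer the integral to the Pi type
  have hmp := EuclideanSpace.volume_preserving_symm_measurableEquiv_toLp (Fin d)
  have hint : (∫ y, f (Ψ y)) = ∫ y : Fin d → ℝ, g' y :=
    hmp.integral_comp (MeasurableEquiv.toLp 2 (Fin d → ℝ)).symm.measurableEmbedding g'
  rw [hCoV, hint]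
  exact riemann_pi d g' hg'c hg's
end

section
/- Let A ⊆ ℝ^d be nonempty, M > 0, and for every x ∈ A let F_x ⊆ ℝ^m be a set contained in the closed ball of radius M centered at 0. Let s : A → ℝ^m be a Lipschitz function with |s(x)| ≤ M and s(x) ∈ F_x for all x ∈ A. Then there exists C > 0 (depending only on M and the Lipschitz constant of s) such that for every j > 2M there is a C-Lipschitz map ψ_j : A × ℝ^m → ℝ^m satisfying: ψ_j(x, u) = u whenever |u| ≤ j; ψ_j(x, u) = s(x) whenever |u| ≥ 2j; and ψ_j(x, w) ∈ F_x for every w ∈ F_x. In particular, constraint sets F_x contained in a common bounded set always satisfy the truncation condition (Condition 2) with Lipschitz constant independent of j. -/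
open Filter Topology Set

/-- if all the constraint sets `F_x ⊆ ℝ^m`, `x ∈ A`, are contained in the
closed ball of radius `M` and `s` is a Lipschitz selection of `F` bounded by `M`, then the
truncation condition (Condition 2) holds with a Lipschitz constant `C` independent of `j`:
for every `j > 2M` there is a `C`-Lipschitz map `ψ_j : A × ℝ^m → ℝ^m` with `ψ_j(x,u) = u`
for `|u| ≤ j`, `ψ_j(x,u) = s(x)` for `|u| ≥ 2j`, and `ψ_j(x, ·)(F_x) ⊆ F_x`. -/
theorem stmt_15 (d m : ℕ) (hd : 1 ≤ d) (hm : 1 ≤ m)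
    (A : Set (EuclideanSpace ℝ (Fin d))) (hA : A.Nonempty) (M : ℝ) (hM : 0 < M)
    (F : EuclideanSpace ℝ (Fin d) → Set (EuclideanSpace ℝ (Fin m)))
    (hF : ∀ x ∈ A, F x ⊆ Metric.closedBall (0 : EuclideanSpace ℝ (Fin m)) M)
    (s : EuclideanSpace ℝ (Fin d) → EuclideanSpace ℝ (Fin m)) (K : NNReal)
    (hs : LipschitzOnWith K s A)
    (hsM : ∀ x ∈ A, ‖s x‖ ≤ M) (hsF : ∀ x ∈ A, s x ∈ F x) :
    ∃ C : ℝ, 0 < C ∧ ∀ j : ℝ, 2 * M < j →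
      ∃ ψ : EuclideanSpace ℝ (Fin d) × EuclideanSpace ℝ (Fin m) → EuclideanSpace ℝ (Fin m),
        LipschitzOnWith (Real.toNNReal C) ψ (A ×ˢ (Set.univ : Set (EuclideanSpace ℝ (Fin m)))) ∧
        (∀ x ∈ A, ∀ u : EuclideanSpace ℝ (Fin m), ‖u‖ ≤ j → ψ (x, u) = u) ∧
        (∀ x ∈ A, ∀ u : EuclideanSpace ℝ (Fin m), 2 * j ≤ ‖u‖ → ψ (x, u) = s x) ∧
        (∀ x ∈ A, ∀ w ∈ F x, ψ (x, w) ∈ F x) := by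
  refine ⟨2 * (K : ℝ) + 5, by positivity, fun j hj => ?_⟩
  have hj0 : (0 : ℝ) < j := lt_trans (by linarith) hj
  -- radial retraction onto the ball of radius `2j`
  set r : EuclideanSpace ℝ (Fin m) → EuclideanSpace ℝ (Fin m) :=
    fun u => (2 * j / max (2 * j) ‖u‖) • u with hr_def
  -- cutoff function
  set θ : EuclideanSpace ℝ (Fin m) → ℝ :=
    fun u => max 0 (min 1 ((2 * j - ‖u‖) / j)) with hθ_def
  have hr_id : ∀ u : EuclideanSpace ℝ (Fin m), ‖u‖ ≤ 2 * j → r u = u := by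
    intro u hu
    simp only [hr_def, max_eq_left hu, div_self (by positivity : (2 * j : ℝ) ≠ 0), one_smul]
  have hθ1 : ∀ u : EuclideanSpace ℝ (Fin m), ‖u‖ ≤ j → θ u = 1 := by
    intro u hu
    have h1 : (1 : ℝ) ≤ (2 * j - ‖u‖) / j := by
      rw [le_div_iff₀ hj0]; linarith
    simp only [hθ_def, min_eq_left h1, max_eq_right zero_le_one]
  have hθ0 : ∀ u : EuclideanSpace ℝ (Fin m), 2 * j ≤ ‖u‖ → θ u = 0 := by
    intro u hu
    have h1 : (2 * j - ‖u‖) / j ≤ 0 := div_nonpos_of_nonpos_of_nonneg (by linarith) hj0.le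
    simp only [hθ_def]
    exact max_eq_left ((min_le_right _ _).trans h1)
  have hθ_nonneg : ∀ u, 0 ≤ θ u := fun u => le_max_left _ _
  have hθ_le_one : ∀ u, θ u ≤ 1 := by
    intro u
    exact max_le zero_le_one (min_le_left _ _)
  have hmax_pos : ∀ u : EuclideanSpace ℝ (Fin m), 0 < max (2 * j) ‖u‖ :=
    fun u => lt_max_iff.2 (Or.inl (by positivity))
  have hr_norm : ∀ u : EuclideanSpace ℝ (Fin m), ‖r u‖ ≤ 2 * j := by
    intro u
    have h1 : ‖r u‖ = (2 * j / max (2 * j) ‖u‖) * ‖u‖ := by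
      rw [hr_def, norm_smul, Real.norm_eq_abs, abs_of_nonneg (by positivity)]
    rw [h1]
    calc (2 * j / max (2 * j) ‖u‖) * ‖u‖
        ≤ (2 * j / max (2 * j) ‖u‖) * max (2 * j) ‖u‖ := by
          gcongr; exact le_max_right _ _
      _ = 2 * j := div_mul_cancel₀ _ (hmax_pos u).ne'
  have hr_lip : ∀ u v : EuclideanSpace ℝ (Fin m), ‖r u - r v‖ ≤ 2 * ‖u - v‖ := by
    intro u v
    set a := max (2 * j) ‖u‖ with ha
    set b := max (2 * j) ‖v‖ with hb
    have ha0 : 0 < a := hmax_pos u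
    have hb0 : 0 < b := hmax_pos v
    have hja : 2 * j ≤ a := le_max_left _ _
    have hab : |a - b| ≤ ‖u - v‖ := by
      calc |a - b| = |max ‖u‖ (2 * j) - max ‖v‖ (2 * j)| := by rw [max_comm ‖u‖, max_comm ‖v‖]
        _ ≤ |‖u‖ - ‖v‖| := abs_max_sub_max_le_abs _ _ _
        _ ≤ ‖u - v‖ := abs_norm_sub_norm_le _ _
    have key : r u - r v = (2 * j / a) • (u - v) + ((2 * j / a) - (2 * j / b)) • v := by
      simp only [hr_def, ← ha, ← hb]
      module
    calc ‖r u - r v‖ ≤ ‖(2 * j / a) • (u - v)‖ + ‖((2 * j / a) - (2 * j / b)) • v‖ := by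
          rw [key]; exact norm_add_le _ _
      _ = (2 * j / a) * ‖u - v‖ + |2 * j / a - 2 * j / b| * ‖v‖ := by
          rw [norm_smul, norm_smul, Real.norm_eq_abs, Real.norm_eq_abs,
            abs_of_nonneg (by positivity)]
      _ ≤ 1 * ‖u - v‖ + |2 * j / a - 2 * j / b| * ‖v‖ := by
          gcongr
          rw [div_le_one ha0]; exact hja
      _ ≤ 1 * ‖u - v‖ + (‖u - v‖ / b) * ‖v‖ := by
          gcongr
          have : 2 * j / a - 2 * j / b = 2 * j * (b - a) / (a * b) := by
            field_simp
          rw [this, abs_div, abs_of_nonneg (by positivity : (0:ℝ) ≤ a * b), abs_mul,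
            abs_of_nonneg (by positivity : (0:ℝ) ≤ 2 * j), div_le_div_iff₀ (by positivity) hb0]
          have h1 : |b - a| ≤ ‖u - v‖ := by rwa [abs_sub_comm]
          calc 2 * j * |b - a| * b ≤ a * ‖u - v‖ * b := by
                apply mul_le_mul _ le_rfl hb0.le (by positivity)
                exact mul_le_mul hja h1 (abs_nonneg _) ha0.le
            _ = ‖u - v‖ * (a * b) := by ring
      _ ≤ 1 * ‖u - v‖ + (‖u - v‖ / b) * b := by
          gcongr; exact le_max_right _ _
      _ = 2 * ‖u - v‖ := by field_simp; ring
  have hθ_lip : ∀ u v : EuclideanSpace ℝ (Fin m), |θ u - θ v| ≤ ‖u - v‖ / j := by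
    intro u v
    simp only [hθ_def]
    calc |max 0 (min 1 ((2 * j - ‖u‖) / j)) - max 0 (min 1 ((2 * j - ‖v‖) / j))|
        = |max (min 1 ((2 * j - ‖u‖) / j)) 0 - max (min 1 ((2 * j - ‖v‖) / j)) 0| := by
          rw [max_comm, max_comm (min 1 ((2 * j - ‖v‖) / j))]
      _ ≤ |min 1 ((2 * j - ‖u‖) / j) - min 1 ((2 * j - ‖v‖) / j)| :=
          abs_max_sub_max_le_abs _ _ _
      _ ≤ max |(1:ℝ) - 1| |(2 * j - ‖u‖) / j - (2 * j - ‖v‖) / j| :=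
          abs_min_sub_min_le_max _ _ _ _
      _ ≤ ‖u - v‖ / j := by
          apply max_le
          · rw [sub_self, abs_zero]; positivity
          · have : (2 * j - ‖u‖) / j - (2 * j - ‖v‖) / j = (‖v‖ - ‖u‖) / j := by
              field_simp
              ring
            rw [this, abs_div, abs_of_pos hj0, abs_sub_comm]
            gcongr
            exact abs_norm_sub_norm_le _ _
  refine ⟨fun p => s p.1 + θ p.2 • (r p.2 - s p.1), ?_, ?_, ?_, ?_⟩
  · rw [lipschitzOnWith_iff_dist_le_mul]
    rintro ⟨x, u⟩ ⟨hx, -⟩ ⟨y, v⟩ ⟨hy, -⟩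
    have hD1 : dist x y ≤ dist (x, u) (y, v) := le_max_left _ _
    have hD2 : ‖u - v‖ ≤ dist (x, u) (y, v) := by
      rw [← dist_eq_norm]; exact le_max_right _ _
    have hD0 : 0 ≤ dist (x, u) (y, v) := dist_nonneg
    set D := dist (x, u) (y, v) with hD
    have hsxy : ‖s x - s y‖ ≤ (K : ℝ) * D := by
      rw [← dist_eq_norm]
      calc dist (s x) (s y) ≤ (K : ℝ) * dist x y :=
            (lipschitzOnWith_iff_dist_le_mul.1 hs) x hx y hy
        _ ≤ (K : ℝ) * D := by gcongr
    have key : (s x + θ u • (r u - s x)) - (s y + θ v • (r v - s y)) =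
        (1 - θ u) • (s x - s y) + θ u • (r u - r v) + (θ u - θ v) • (r v - s y) := by
      module
    have hθuv : |θ u - θ v| ≤ D / j := (hθ_lip u v).trans (by gcongr)
    have hrvsy : ‖r v - s y‖ ≤ 2 * j + M :=
      (norm_sub_le _ _).trans (add_le_add (hr_norm v) (hsM y hy))
    have h1t : |1 - θ u| ≤ 1 := by
      rw [abs_of_nonneg (by linarith [hθ_le_one u])]; linarith [hθ_nonneg u]
    have hMj : M ≤ j / 2 := by linarith
    calc dist (s x + θ u • (r u - s x)) (s y + θ v • (r v - s y))
        = ‖(1 - θ u) • (s x - s y) + θ u • (r u - r v) + (θ u - θ v) • (r v - s y)‖ := by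
          rw [dist_eq_norm, key]
      _ ≤ ‖(1 - θ u) • (s x - s y)‖ + ‖θ u • (r u - r v)‖ + ‖(θ u - θ v) • (r v - s y)‖ :=
          norm_add₃_le
      _ = |1 - θ u| * ‖s x - s y‖ + |θ u| * ‖r u - r v‖ + |θ u - θ v| * ‖r v - s y‖ := by
          simp [norm_smul]
      _ ≤ 1 * ((K : ℝ) * D) + 1 * (2 * ‖u - v‖) + (D / j) * (2 * j + M) := by
          gcongr <;> first
            | positivity
            | exact h1t
            | exact hsxy
            | (rw [abs_of_nonneg (hθ_nonneg u)]; exact hθ_le_one u)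
            | exact hr_lip u v
            | exact hθuv
            | exact hrvsy
      _ ≤ 1 * ((K : ℝ) * D) + 1 * (2 * D) + (D / j) * (2 * j + j / 2) := by gcongr
      _ = ((K : ℝ) + 9 / 2) * D := by field_simp; ring
      _ ≤ (Real.toNNReal (2 * (K : ℝ) + 5) : ℝ) * D := by
          rw [Real.coe_toNNReal _ (by positivity)]
          have : (0:ℝ) ≤ (K : ℝ) := K.coe_nonneg
          nlinarith
  · intro x hx u hu
    simp only
    rw [hθ1 u hu, hr_id u (by linarith), one_smul]
    abel
  · intro x hx u hu
    simp only
    rw [hθ0 u hu, zero_smul, add_zero]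
  · intro x hx w hw
    have hwM : ‖w‖ ≤ M := by
      have := hF x hx hw
      rwa [Metric.mem_closedBall, dist_zero_right] at this
    simp only
    rw [hθ1 w (by linarith), hr_id w (by linarith), one_smul]
    convert hw using 1
    abel
end

section
/- Let p > 1, C > 0, κ ≥ 0, and let σ : ℝ^{m×d} → ℝ satisfy |σ(A) − σ(B)| ≤ C (κ + ‖A‖^{p−1} + ‖B‖^{p−1}) ‖A − B‖ for all m×d matrices A, B. Let R > 0, let v : B(0,R) → ℝ^m be continuously differentiable with ∫_{B(0,R)} ‖Dv‖^p dz < ∞ and with σ(Dv) integrable, and let Ψ : ℝ^m → ℝ^m be continuously differentiable with Λ = sup_z ‖DΨ(z)‖ < ∞ and θ = sup_z ‖DΨ(z) − I‖ < ∞. Then σ(D(Ψ∘v)) is integrable and |∫_{B(0,R)} σ(Dv) dz − ∫_{B(0,R)} σ(D(Ψ∘v)) dz| ≤ C θ [ κ |B(0,R)|^{(p−1)/p} (∫_{B(0,R)} ‖Dv‖^p dz)^{1/p} + (1 + Λ^{p−1}) ∫_{B(0,R)} ‖Dv‖^p dz ]. -/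
open Filter Topology MeasureTheory Set

attribute [local instance] Matrix.frobeniusNormedAddCommGroup Matrix.frobeniusNormedSpace

/-- The Jacobian matrix of a map between Euclidean spaces, in the standard bases. -/
noncomputable def matDeriv (d m : ℕ)
    (v : EuclideanSpace ℝ (Fin d) → EuclideanSpace ℝ (Fin m))
    (z : EuclideanSpace ℝ (Fin d)) : Matrix (Fin m) (Fin d) ℝ :=
  LinearMap.toMatrix (PiLp.basisFun 2 ℝ (Fin d)) (PiLp.basisFun 2 ℝ (Fin m))
    (fderiv ℝ v z).toLinearMap

-- continuity of matDeriv
theorem matDeriv_continuous (d m : ℕ)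
    (v : EuclideanSpace ℝ (Fin d) → EuclideanSpace ℝ (Fin m)) (hv : ContDiff ℝ 1 v) :
    Continuous (matDeriv d m v) := by
  have h1 : Continuous (fderiv ℝ v) := hv.continuous_fderiv one_ne_zero
  let g : (EuclideanSpace ℝ (Fin d) →L[ℝ] EuclideanSpace ℝ (Fin m)) →ₗ[ℝ]
      Matrix (Fin m) (Fin d) ℝ :=
    (LinearMap.toMatrix (PiLp.basisFun 2 ℝ (Fin d))
      (PiLp.basisFun 2 ℝ (Fin m))).toLinearMap.comp (ContinuousLinearMap.coeLM ℝ)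
  have hg : Continuous g := g.continuous_of_finiteDimensional
  exact hg.comp h1

-- chain rule
theorem matDeriv_comp (d m : ℕ)
    (v : EuclideanSpace ℝ (Fin d) → EuclideanSpace ℝ (Fin m)) (hv : ContDiff ℝ 1 v)
    (Ψ : EuclideanSpace ℝ (Fin m) → EuclideanSpace ℝ (Fin m)) (hΨ : ContDiff ℝ 1 Ψ)
    (z : EuclideanSpace ℝ (Fin d)) :
    matDeriv d m (Ψ ∘ v) z = matDeriv m m Ψ (v z) * matDeriv d m v z := by
  have h1 : fderiv ℝ (Ψ ∘ v) z = (fderiv ℝ Ψ (v z)).comp (fderiv ℝ v z) :=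
    fderiv_comp z (hΨ.differentiable one_ne_zero _) (hv.differentiable one_ne_zero z)
  simp only [matDeriv, h1, ContinuousLinearMap.coe_comp,
    LinearMap.toMatrix_comp _ (PiLp.basisFun 2 ℝ (Fin m)) _]
  exact LinearMap.toMatrix_comp ..

theorem sigma_continuous (d m : ℕ) (p C κ : ℝ) (hp : 1 < p) (hC : 0 < C) (hκ : 0 ≤ κ)
    (σ : Matrix (Fin m) (Fin d) ℝ → ℝ)
    (hσ : ∀ A B : Matrix (Fin m) (Fin d) ℝ,
      |σ A - σ B| ≤ C * (κ + ‖A‖ ^ (p - 1) + ‖B‖ ^ (p - 1)) * ‖A - B‖) :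
    Continuous σ := by
  rw [continuous_iff_continuousAt]
  intro A
  have hcn : Continuous fun B : Matrix (Fin m) (Fin d) ℝ => ‖B‖ ^ (p - 1) := by
    rw [continuous_iff_continuousAt]
    intro B
    exact (Real.continuousAt_rpow_const _ _ (Or.inr (by linarith))).comp
      continuous_norm.continuousAt
  have hg : Tendsto (fun B : Matrix (Fin m) (Fin d) ℝ =>
      C * (κ + ‖B‖ ^ (p - 1) + ‖A‖ ^ (p - 1)) * ‖B - A‖) (𝓝 A) (𝓝 0) := by
    have : Continuous fun B : Matrix (Fin m) (Fin d) ℝ =>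
        C * (κ + ‖B‖ ^ (p - 1) + ‖A‖ ^ (p - 1)) * ‖B - A‖ := by
      fun_prop
    have h0 := this.continuousAt (x := A)
    rw [ContinuousAt] at h0
    simpa using h0
  rw [ContinuousAt, tendsto_iff_dist_tendsto_zero]
  apply squeeze_zero (fun B => dist_nonneg) _ hg
  intro B
  rw [Real.dist_eq]
  exact hσ B A

/-- energy comparison between a map `v` and its composition `Ψ∘v` with a `C¹`
map close to the identity, for an integrand `σ` with `p`-growth Lipschitz modulus:
`|∫ σ(Dv) − ∫ σ(D(Ψ∘v))| ≤ C θ [κ |B|^{(p−1)/p} (∫‖Dv‖^p)^{1/p} + (1 + Λ^{p−1}) ∫‖Dv‖^p]`,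
where `Λ = sup ‖DΨ‖` and `θ = sup ‖DΨ − I‖`. -/
theorem stmt_17 (d m : ℕ) (hd : 1 ≤ d) (hm : 1 ≤ m) (p C κ : ℝ)
    (hp : 1 < p) (hC : 0 < C) (hκ : 0 ≤ κ)
    (σ : Matrix (Fin m) (Fin d) ℝ → ℝ)
    (hσ : ∀ A B : Matrix (Fin m) (Fin d) ℝ,
      |σ A - σ B| ≤ C * (κ + ‖A‖ ^ (p - 1) + ‖B‖ ^ (p - 1)) * ‖A - B‖)
    (R : ℝ) (hR : 0 < R)
    (v : EuclideanSpace ℝ (Fin d) → EuclideanSpace ℝ (Fin m)) (hv : ContDiff ℝ 1 v)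
    (hvp : IntegrableOn (fun z => ‖matDeriv d m v z‖ ^ p)
      (Metric.ball (0 : EuclideanSpace ℝ (Fin d)) R) volume)
    (hσv : IntegrableOn (fun z => σ (matDeriv d m v z))
      (Metric.ball (0 : EuclideanSpace ℝ (Fin d)) R) volume)
    (Ψ : EuclideanSpace ℝ (Fin m) → EuclideanSpace ℝ (Fin m)) (hΨ : ContDiff ℝ 1 Ψ)
    (Λ θ : ℝ)
    (hΛ : ∀ z, ‖matDeriv m m Ψ z‖ ≤ Λ)
    (hθ : ∀ z, ‖matDeriv m m Ψ z - 1‖ ≤ θ) :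
    IntegrableOn (fun z => σ (matDeriv d m (Ψ ∘ v) z))
        (Metric.ball (0 : EuclideanSpace ℝ (Fin d)) R) volume ∧
      |(∫ z in Metric.ball (0 : EuclideanSpace ℝ (Fin d)) R, σ (matDeriv d m v z)) -
          ∫ z in Metric.ball (0 : EuclideanSpace ℝ (Fin d)) R, σ (matDeriv d m (Ψ ∘ v) z)| ≤
        C * θ *
          (κ * (volume (Metric.ball (0 : EuclideanSpace ℝ (Fin d)) R)).toReal ^ ((p - 1) / p) *
              (∫ z in Metric.ball (0 : EuclideanSpace ℝ (Fin d)) R,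
                ‖matDeriv d m v z‖ ^ p) ^ (1 / p) +
            (1 + Λ ^ (p - 1)) *
              ∫ z in Metric.ball (0 : EuclideanSpace ℝ (Fin d)) R,
                ‖matDeriv d m v z‖ ^ p) := by
  set B := Metric.ball (0 : EuclideanSpace ℝ (Fin d)) R with hB
  have hΛ0 : 0 ≤ Λ := le_trans (norm_nonneg _) (hΛ 0)
  have hθ0 : 0 ≤ θ := le_trans (norm_nonneg _) (hθ 0)
  have hp0 : (0:ℝ) < p := by linarith
  have hp1 : (0:ℝ) < p - 1 := by linarith
  -- continuity facts
  have hσc : Continuous σ := sigma_continuous d m p C κ hp hC hκ σ hσ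
  have hvc : Continuous (matDeriv d m v) := matDeriv_continuous d m v hv
  have hΨv : ContDiff ℝ 1 (Ψ ∘ v) := hΨ.comp hv
  have hΨvc : Continuous (matDeriv d m (Ψ ∘ v)) := matDeriv_continuous d m _ hΨv
  -- integrability from continuity on a compact set
  have hIc : ∀ f : EuclideanSpace ℝ (Fin d) → ℝ, Continuous f → IntegrableOn f B volume := by
    intro f hf
    exact (hf.continuousOn.integrableOn_compact
      (isCompact_closedBall (0 : EuclideanSpace ℝ (Fin d)) R)).mono_set
      Metric.ball_subset_closedBall
  have i2 : IntegrableOn (fun z => σ (matDeriv d m (Ψ ∘ v) z)) B volume :=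
    hIc _ (hσc.comp hΨvc)
  have i3 : IntegrableOn (fun z => ‖matDeriv d m v z‖) B volume := hIc _ hvc.norm
  refine ⟨i2, ?_⟩
  -- pointwise bound
  have key : ∀ z, |σ (matDeriv d m v z) - σ (matDeriv d m (Ψ ∘ v) z)| ≤
      C * θ * (κ * ‖matDeriv d m v z‖ +
        (1 + Λ ^ (p - 1)) * ‖matDeriv d m v z‖ ^ p) := by
    intro z
    rw [matDeriv_comp d m v hv Ψ hΨ z]
    set A := matDeriv d m v z with hA
    set M := matDeriv m m Ψ (v z) with hM
    have h1 : ‖A - M * A‖ ≤ θ * ‖A‖ := by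
      have he : A - M * A = (1 - M) * A := by rw [Matrix.sub_mul, Matrix.one_mul]
      rw [he]
      calc ‖(1 - M) * A‖ ≤ ‖1 - M‖ * ‖A‖ := Matrix.frobenius_norm_mul _ _
        _ ≤ θ * ‖A‖ := by
            apply mul_le_mul_of_nonneg_right _ (norm_nonneg _)
            rw [norm_sub_rev]; exact hθ (v z)
    have h2 : ‖M * A‖ ^ (p - 1) ≤ Λ ^ (p - 1) * ‖A‖ ^ (p - 1) := by
      rw [← Real.mul_rpow hΛ0 (norm_nonneg _)]
      exact Real.rpow_le_rpow (norm_nonneg _)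
        (le_trans (Matrix.frobenius_norm_mul _ _)
          (mul_le_mul_of_nonneg_right (hΛ _) (norm_nonneg _))) hp1.le
    have h3 : ‖A‖ ^ (p - 1) * ‖A‖ = ‖A‖ ^ p := by
      rcases eq_or_ne (‖A‖) 0 with h | h
      · rw [h, Real.zero_rpow hp1.ne', Real.zero_rpow hp0.ne', zero_mul]
      · rw [← Real.rpow_add_one h (p - 1), sub_add_cancel]
    have hnn : (0:ℝ) ≤ κ + ‖A‖ ^ (p - 1) + Λ ^ (p - 1) * ‖A‖ ^ (p - 1) := by
      have := Real.rpow_nonneg (norm_nonneg A) (p - 1)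
      have := Real.rpow_nonneg hΛ0 (p - 1)
      positivity
    calc |σ A - σ (M * A)|
        ≤ C * (κ + ‖A‖ ^ (p - 1) + ‖M * A‖ ^ (p - 1)) * ‖A - M * A‖ := hσ _ _
      _ ≤ C * (κ + ‖A‖ ^ (p - 1) + Λ ^ (p - 1) * ‖A‖ ^ (p - 1)) * (θ * ‖A‖) := by
          apply mul_le_mul _ h1 (norm_nonneg _) (by positivity)
          exact mul_le_mul_of_nonneg_left (by linarith) hC.le
      _ = C * θ * (κ * ‖A‖ + (1 + Λ ^ (p - 1)) * (‖A‖ ^ (p - 1) * ‖A‖)) := by ring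
      _ = C * θ * (κ * ‖A‖ + (1 + Λ ^ (p - 1)) * ‖A‖ ^ p) := by rw [h3]
  -- Hölder
  have hfin : IsFiniteMeasure (volume.restrict B) :=
    ⟨by rw [Measure.restrict_apply_univ]; exact measure_ball_lt_top⟩
  have hold : ∫ z in B, ‖matDeriv d m v z‖ ≤
      (volume B).toReal ^ ((p - 1) / p) * (∫ z in B, ‖matDeriv d m v z‖ ^ p) ^ (1 / p) := by
    have hpq : p.HolderConjugate (p / (p - 1)) := Real.HolderConjugate.conjExponent hp
    obtain ⟨Cb, hCb⟩ := (isCompact_closedBall (0 : EuclideanSpace ℝ (Fin d)) R).exists_bound_of_continuousOn hvc.norm.continuousOn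
    have hmem : MemLp (fun z => ‖matDeriv d m v z‖) (ENNReal.ofReal p) (volume.restrict B) := by
      apply MemLp.of_bound hvc.norm.aestronglyMeasurable.restrict Cb
      rw [ae_restrict_iff' measurableSet_ball]
      exact Eventually.of_forall fun z hz => hCb z (Metric.ball_subset_closedBall hz)
    have hmem1 : MemLp (fun _ : EuclideanSpace ℝ (Fin d) => (1:ℝ))
        (ENNReal.ofReal (p / (p - 1))) (volume.restrict B) := memLp_const 1
    have h := integral_mul_le_Lp_mul_Lq_of_nonneg hpq
      (Eventually.of_forall fun z => norm_nonneg _)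
      (Eventually.of_forall fun _ => zero_le_one) hmem hmem1
    simp only [mul_one, Real.one_rpow, integral_const, smul_eq_mul, measureReal_def,
      Measure.restrict_apply_univ] at h
    have hq : 1 / (p / (p - 1)) = (p - 1) / p := one_div_div _ _
    rw [hq] at h
    calc ∫ z in B, ‖matDeriv d m v z‖
        ≤ (∫ z in B, ‖matDeriv d m v z‖ ^ p) ^ (1 / p) *
          (volume B).toReal ^ ((p - 1) / p) := h
      _ = _ := by ring
  -- assemble
  have iabs : IntegrableOn (fun z =>
      |σ (matDeriv d m v z) - σ (matDeriv d m (Ψ ∘ v) z)|) B volume := (hσv.sub i2).abs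
  have ig : IntegrableOn (fun z => C * θ * (κ * ‖matDeriv d m v z‖ +
      (1 + Λ ^ (p - 1)) * ‖matDeriv d m v z‖ ^ p)) B volume :=
    (((i3.const_mul κ).add (hvp.const_mul _)).const_mul (C * θ))
  rw [← integral_sub hσv i2]
  calc |∫ z in B, (σ (matDeriv d m v z) - σ (matDeriv d m (Ψ ∘ v) z))|
      ≤ ∫ z in B, |σ (matDeriv d m v z) - σ (matDeriv d m (Ψ ∘ v) z)| := by
        rw [← Real.norm_eq_abs]
        exact (norm_integral_le_integral_norm _).trans_eq (by simp [Real.norm_eq_abs])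
    _ ≤ ∫ z in B, C * θ * (κ * ‖matDeriv d m v z‖ +
          (1 + Λ ^ (p - 1)) * ‖matDeriv d m v z‖ ^ p) :=
        integral_mono iabs ig fun z => key z
    _ = C * θ * (κ * (∫ z in B, ‖matDeriv d m v z‖) +
          (1 + Λ ^ (p - 1)) * ∫ z in B, ‖matDeriv d m v z‖ ^ p) := by
        rw [integral_const_mul, integral_add (i3.const_mul κ) (hvp.const_mul _),
          integral_const_mul, integral_const_mul]
    _ ≤ C * θ * (κ * ((volume B).toReal ^ ((p - 1) / p) *
          (∫ z in B, ‖matDeriv d m v z‖ ^ p) ^ (1 / p)) +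
          (1 + Λ ^ (p - 1)) * ∫ z in B, ‖matDeriv d m v z‖ ^ p) := by
        have := mul_le_mul_of_nonneg_left hold hκ
        have h0 : (0:ℝ) ≤ C * θ := mul_nonneg hC.le hθ0
        apply mul_le_mul_of_nonneg_left _ h0
        linarith
    _ = _ := by ring
end
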